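/- arXiv:1910.09262 — 6 statements merged into one kernel-verified Lean document; each statement's English description precedes it below -/
import Mathlib

section
/- For any prime p ≥ 3 and any integer k with 1 ≤ k ≤ (p-1)/2, we have H_{(p-1)/2 - k} ≡ -2 q_2 + 2 H_{2k} - H_k (mod p), where q_2 = (2^{p-1} - 1)/p is the Fermat quotient of 2. -/
/-- The `n`-th harmonic number as a rational. -/
def H (n : ℕ) : ℚ := ∑ i ∈ Finset.range n, (1 : ℚ) / (i + 1)

/-- Congruence of rationals modulo `m`: the difference is `m` times a rational
whose denominator is not divisible by `m`'s prime. -/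
def ratCongr (m : ℕ) (x y : ℚ) : Prop :=
  ∃ r : ℚ, ¬ ((m : ℤ) ∣ (r.den : ℤ)) ∧ x - y = (m : ℚ) * r

open Finset

variable {p : ℕ} [Fact p.Prime]

/-- cast of a nat in (0,p) is nonzero -/
lemma cast_ne_zero' (j : ℕ) (h1 : 0 < j) (h2 : j < p) : (j : ZMod p) ≠ 0 := by
  intro h
  rw [ZMod.natCast_eq_zero_iff] at h
  exact absurd (Nat.le_of_dvd h1 h) (by omega)

lemma twoNeZero' (hp3 : 3 ≤ p) : (2 : ZMod p) ≠ 0 := by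
  have := cast_ne_zero' (p := p) 2 (by norm_num) (by omega)
  simpa using this

/-- Z1: harmonic sum over full range is 0 -/
lemma Z1 (hp3 : 3 ≤ p) : ∑ i ∈ range (p-1), ((i : ZMod p) + 1)⁻¹ = 0 := by
  have h2 : (2 : ZMod p) ≠ 0 := twoNeZero' hp3
  have key : ∑ i ∈ range (p-1), ((i : ZMod p) + 1)⁻¹
      = - ∑ i ∈ range (p-1), ((i : ZMod p) + 1)⁻¹ := by
    nth_rewrite 1 [← Finset.sum_range_reflect]
    rw [← Finset.sum_neg_distrib]
    refine Finset.sum_congr rfl fun i hi => ?_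
    rw [Finset.mem_range] at hi
    have h1 : ((p - 1 - 1 - i : ℕ) : ZMod p) + 1 = -((i : ZMod p) + 1) := by
      have e : (p - 1 - 1 - i) + 1 + (i + 1) = p := by omega
      have := congrArg (Nat.cast : ℕ → ZMod p) e
      push_cast at this
      rw [ZMod.natCast_self] at this
      linear_combination this
    rw [h1, inv_neg]
  have := key
  rw [eq_neg_iff_add_eq_zero] at this
  have h22 : (2 : ZMod p) * ∑ i ∈ range (p-1), ((i : ZMod p) + 1)⁻¹ = 0 := by
    rw [two_mul]; exact this
  exact (mul_eq_zero.mp h22).resolve_left h2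

/-- Z2: C(p-1, j) ≡ (-1)^j -/
lemma Z2 (hp : p.Prime) : ∀ j, j ≤ p - 1 → (((p-1).choose j : ℕ) : ZMod p) = (-1)^j := by
  intro j
  induction j with
  | zero => simp
  | succ j ih =>
    intro hj
    have hj' : j ≤ p - 1 := by omega
    have hpc : (p : ℕ) ∣ p.choose (j+1) := hp.dvd_choose_self (by omega) (by have := hp.two_le; omega)
    have pascal : p.choose (j+1) = (p-1).choose j + (p-1).choose (j+1) := by
      have : p = (p-1) + 1 := by have := hp.two_le; omega
      rw [this, Nat.choose_succ_succ]
      simp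
    have : (((p-1).choose j : ℕ) : ZMod p) + (((p-1).choose (j+1) : ℕ) : ZMod p) = 0 := by
      rw [← Nat.cast_add, ← pascal, ZMod.natCast_eq_zero_iff]
      exact hpc
    rw [ih hj'] at this
    rw [pow_succ]
    linear_combination this

/-- Z3: Fermat quotient as alternating harmonic sum -/
lemma Z3 (hp : p.Prime) (hp3 : 3 ≤ p) (N : ℕ) (hN : p * N = 2^(p-1) - 1) :
    (2 : ZMod p) * N = ∑ i ∈ range (p-1), (-1)^i * ((i : ZMod p) + 1)⁻¹ := by
  -- c j = p.choose j / p for 1 ≤ j ≤ p-1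
  have hsum : ∑ j ∈ Ico 1 p, p.choose j = 2 * (p * N) := by
    have h1 : ∑ j ∈ range (p+1), p.choose j = 2^p := Nat.sum_range_choose p
    have h2 : 2^p = 2 * 2^(p-1) := by
      rw [← pow_succ']
      congr 1
      omega
    have h4 : ∑ j ∈ range (p+1), p.choose j = 1 + (∑ j ∈ Ico 1 p, p.choose j) + 1 := by
      rw [Finset.sum_range_succ, Nat.choose_self, Finset.range_eq_Ico,
        Finset.sum_eq_sum_Ico_succ_bot (by positivity), Nat.choose_zero_right]
    have hpow : 1 ≤ 2^(p-1) := Nat.one_le_two_pow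
    rw [hN]
    set s := ∑ j ∈ Ico 1 p, p.choose j
    set t := ∑ j ∈ range (p+1), p.choose j
    set b := 2^(p-1)
    set c := 2^p
    omega
  -- divide by p
  have hc : ∀ j ∈ Ico 1 p, p * (p.choose j / p) = p.choose j := by
    intro j hj
    rw [Finset.mem_Ico] at hj
    exact Nat.mul_div_cancel' (hp.dvd_choose_self (by omega) hj.2)
  have hdiv : p * (∑ j ∈ Ico 1 p, p.choose j / p) = p * (2 * N) := by
    rw [Finset.mul_sum, Finset.sum_congr rfl hc, hsum]
    ring
  have hsum2 : ∑ j ∈ Ico 1 p, p.choose j / p = 2 * N :=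
    Nat.eq_of_mul_eq_mul_left hp.pos hdiv
  -- cast to ZMod p
  have hcast : ((2 * N : ℕ) : ZMod p) = ∑ j ∈ Ico 1 p, ((p.choose j / p : ℕ) : ZMod p) := by
    rw [← Nat.cast_sum, hsum2]
  have hterm : ∀ j ∈ Ico 1 p, ((p.choose j / p : ℕ) : ZMod p) = (-1)^(j-1) * (j : ZMod p)⁻¹ := by
    intro j hj
    rw [Finset.mem_Ico] at hj
    have hj1 := hj.1
    have hj2 := hj.2
    -- p * choose (p-1) (j-1) = choose p j * j
    have key : p * (p-1).choose (j-1) = p.choose j * j := by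
      have := Nat.add_one_mul_choose_eq (p-1) (j-1)
      have e1 : p-1+1 = p := by have := hp.two_le; omega
      have e2 : j-1+1 = j := by omega
      rw [e1, e2] at this
      exact this
    have key2 : (p-1).choose (j-1) = (p.choose j / p) * j := by
      have h5 : p.choose j = p * (p.choose j / p) := (hc j (by simp [Finset.mem_Ico]; omega)).symm
      rw [h5, mul_assoc] at key
      exact Nat.eq_of_mul_eq_mul_left hp.pos key
    have hcast2 : (((p-1).choose (j-1) : ℕ) : ZMod p) = ((p.choose j / p : ℕ) : ZMod p) * (j : ZMod p) := by
      rw [key2]; push_cast; ring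
    rw [Z2 hp (j-1) (by omega)] at hcast2
    have hjne : (j : ZMod p) ≠ 0 := cast_ne_zero' j (by omega) hj2
    rw [eq_mul_inv_iff_mul_eq₀ hjne]
    linear_combination -hcast2
  rw [Finset.sum_congr rfl hterm] at hcast
  have hre : ∑ j ∈ Ico 1 p, (-1 : ZMod p)^(j-1) * (j : ZMod p)⁻¹
      = ∑ i ∈ range (p-1), (-1 : ZMod p)^i * ((i : ZMod p) + 1)⁻¹ := by
    rw [Finset.sum_Ico_eq_sum_range]
    refine Finset.sum_congr (by congr 1) fun i hi => ?_
    congr 1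
    · congr 1
      omega
    · congr 1
      push_cast
      ring
  rw [hre] at hcast
  rw [← hcast]
  push_cast
  ring

/-- Z4: alternating sum split -/
lemma Z4 (htwo : (2 : ZMod p) ≠ 0) (m : ℕ) :
    ∑ i ∈ range (2*m), (-1 : ZMod p)^i * ((i : ZMod p) + 1)⁻¹
    = (∑ i ∈ range (2*m), ((i : ZMod p) + 1)⁻¹) - ∑ i ∈ range m, ((i : ZMod p) + 1)⁻¹ := by
  induction m with
  | zero => simp
  | succ m ih =>
    have e : 2 * (m+1) = (2*m) + 1 + 1 := by ring
    rw [e, Finset.sum_range_succ, Finset.sum_range_succ, Finset.sum_range_succ,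
      Finset.sum_range_succ, Finset.sum_range_succ, ih]
    have h1 : (-1 : ZMod p)^(2*m) = 1 := by
      rw [pow_mul]; simp
    have h2 : (-1 : ZMod p)^(2*m+1) = -1 := by
      rw [pow_succ, h1]; ring
    have h4 : (((2*m+1 : ℕ) : ZMod p) + 1)⁻¹ = 2⁻¹ * ((m : ZMod p) + 1)⁻¹ := by
      rw [show ((2*m+1 : ℕ) : ZMod p) + 1 = 2 * ((m : ZMod p) + 1) by push_cast; ring, mul_inv]
    rw [h1, h2, h4]
    have hinv : (2 : ZMod p) * 2⁻¹ = 1 := mul_inv_cancel₀ htwo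
    first
    | linear_combination (((m : ZMod p)+1)⁻¹) * hinv
    | linear_combination (-((m : ZMod p)+1)⁻¹) * hinv
    | linear_combination (2*((m : ZMod p)+1)⁻¹) * hinv
    | linear_combination (-2*((m : ZMod p)+1)⁻¹) * hinv

/-- Z5: odd denominators -/
lemma Z5 (k : ℕ) : ∑ i ∈ range (2*k), ((i : ZMod p) + 1)⁻¹
    = (∑ i ∈ range k, (((2*i : ℕ) : ZMod p) + 1)⁻¹)
      + 2⁻¹ * ∑ i ∈ range k, ((i : ZMod p) + 1)⁻¹ := by
  induction k with
  | zero => simp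
  | succ k ih =>
    have e : 2 * (k+1) = (2*k) + 1 + 1 := by ring
    rw [e, Finset.sum_range_succ, Finset.sum_range_succ, Finset.sum_range_succ,
      Finset.sum_range_succ, ih]
    have h4 : (((2*k+1 : ℕ) : ZMod p) + 1)⁻¹ = 2⁻¹ * ((k : ZMod p) + 1)⁻¹ := by
      rw [show ((2*k+1 : ℕ) : ZMod p) + 1 = 2 * ((k : ZMod p) + 1) by push_cast; ring, mul_inv]
    rw [h4]
    push_cast
    ring

/-- Z6: tail of harmonic sum in terms of odd reciprocals -/
lemma Z6 (hp3 : 3 ≤ p) (hpodd : p % 2 = 1) (k : ℕ) (hk1 : 1 ≤ k) (hk2 : k ≤ (p-1)/2) :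
    (∑ i ∈ range ((p-1)/2), ((i : ZMod p) + 1)⁻¹)
      - ∑ i ∈ range ((p-1)/2 - k), ((i : ZMod p) + 1)⁻¹
    = -2 * ∑ i ∈ range k, (((2*i : ℕ) : ZMod p) + 1)⁻¹ := by
  set m := (p-1)/2 with hm
  have hmk : m - k ≤ m := by omega
  have hp2m : 2*m + 1 = p := by omega
  rw [← Finset.sum_Ico_eq_sub _ hmk, Finset.sum_Ico_eq_sum_range]
  have hlen : m - (m - k) = k := by omega
  rw [hlen]
  have htwo : (2 : ZMod p) ≠ 0 := twoNeZero' hp3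
  have hterm : ∀ i ∈ range k, (((m - k + i : ℕ) : ZMod p) + 1)⁻¹
      = -2 * (((2*(k-1-i) : ℕ) : ZMod p) + 1)⁻¹ := by
    intro i hi
    rw [Finset.mem_range] at hi
    set x := ((m - k + i : ℕ) : ZMod p) + 1 with hx
    set y := (((2*(k-1-i) : ℕ)) : ZMod p) + 1 with hy
    have hnat : 2 * ((m - k + i) + 1) + (2*(k-1-i) + 1) = p := by omega
    have hzx : 2 * x + y = 0 := by
      have := congrArg (Nat.cast : ℕ → ZMod p) hnat
      push_cast at this
      rw [ZMod.natCast_self] at this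
      rw [hx, hy]
      push_cast
      linear_combination this
    -- x = -y * 2⁻¹, hence x⁻¹ = -2 * y⁻¹
    have hxy : x = -y * 2⁻¹ := by
      field_simp
      linear_combination hzx
    rw [hxy]
    rw [show -y * 2⁻¹ = -(y * 2⁻¹) by ring, inv_neg, mul_inv, inv_inv]
    ring
  rw [Finset.sum_congr rfl hterm, ← Finset.mul_sum]
  congr 1
  rw [← Finset.sum_range_reflect]
  refine Finset.sum_congr rfl fun i hi => ?_
  rw [Finset.mem_range] at hi
  congr 3
  omega

/-- Key identity in ZMod p -/
lemma keyZMod (hp : p.Prime) (hp3 : 3 ≤ p) (k : ℕ) (hk1 : 1 ≤ k) (hk2 : k ≤ (p-1)/2)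
    (N : ℕ) (hN : p * N = 2^(p-1) - 1) :
    (∑ i ∈ range ((p-1)/2 - k), ((i : ZMod p) + 1)⁻¹) + 2 * N
      - 2 * (∑ i ∈ range (2*k), ((i : ZMod p) + 1)⁻¹)
      + (∑ i ∈ range k, ((i : ZMod p) + 1)⁻¹) = 0 := by
  have hpodd : p % 2 = 1 := Nat.odd_iff.mp (hp.odd_of_ne_two (by omega))
  have htwo : (2 : ZMod p) ≠ 0 := twoNeZero' hp3
  set m := (p-1)/2 with hm
  have h2m : 2*m = p - 1 := by omega
  have hA := Z3 hp hp3 N hN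
  have hZ4 := Z4 htwo m
  rw [h2m] at hZ4
  have hZ1 := Z1 (p := p) hp3
  have hZ5 := Z5 (p := p) k
  have hZ6 := Z6 hp3 hpodd k hk1 hk2
  have hinv : (2 : ZMod p) * 2⁻¹ = 1 := mul_inv_cancel₀ htwo
  linear_combination (-1 : ZMod p) * hZ6 + hA + hZ4 + hZ1 + (-2 : ZMod p) * hZ5
    + (-(∑ i ∈ range k, ((i : ZMod p)+1)⁻¹)) * hinv

/-- scaled harmonic numer -/
def SF (p n : ℕ) : ℕ := ∑ i ∈ range n, (p-1).factorial / (i+1)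

lemma SF_q (p n : ℕ) (hn : n ≤ p - 1) :
    (((p-1).factorial : ℕ) : ℚ) * H n = ((SF p n : ℕ) : ℚ) := by
  rw [H, SF, Finset.mul_sum, Nat.cast_sum]
  refine Finset.sum_congr rfl fun i hi => ?_
  rw [Finset.mem_range] at hi
  have hdvd : (i+1) ∣ (p-1).factorial := Nat.dvd_factorial (by omega) (by omega)
  rw [Nat.cast_div hdvd (by positivity)]
  push_cast
  ring

lemma SF_zmod (p n : ℕ) [Fact p.Prime] (hn : n ≤ p - 1) :
    ((SF p n : ℕ) : ZMod p) = (((p-1).factorial : ℕ) : ZMod p)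
      * ∑ i ∈ range n, ((i : ZMod p) + 1)⁻¹ := by
  rw [SF, Nat.cast_sum, Finset.mul_sum]
  refine Finset.sum_congr rfl fun i hi => ?_
  rw [Finset.mem_range] at hi
  have hdvd : (i+1) ∣ (p-1).factorial := Nat.dvd_factorial (by omega) (by omega)
  have hne : (((i+1) : ℕ) : ZMod p) ≠ 0 := cast_ne_zero' (i+1) (by omega) (by
    have := (Fact.out : p.Prime).two_le; omega)
  rw [Nat.cast_div hdvd hne, div_eq_mul_inv]
  push_cast
  ring

theorem stmt1 (p k : ℕ) (hp : p.Prime) (hp3 : 3 ≤ p) (hk1 : 1 ≤ k) (hk2 : k ≤ (p - 1) / 2) :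
    ratCongr p (H ((p - 1) / 2 - k))
      (-2 * ((2 ^ (p - 1) - 1 : ℚ) / p) + 2 * H (2 * k) - H k) := by
  haveI : Fact p.Prime := ⟨hp⟩
  have hpodd : p % 2 = 1 := Nat.odd_iff.mp (hp.odd_of_ne_two (by omega))
  have hpow : 1 ≤ 2^(p-1) := Nat.one_le_two_pow
  -- N, the Fermat quotient
  have htwo : (2 : ZMod p) ≠ 0 := twoNeZero' hp3
  have hdvd : p ∣ 2^(p-1) - 1 := by
    rw [← ZMod.natCast_eq_zero_iff]
    push_cast [Nat.cast_sub hpow]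
    rw [ZMod.pow_card_sub_one_eq_one htwo]
    ring
  set N : ℕ := (2^(p-1) - 1) / p with hNdef
  have hN : p * N = 2^(p-1) - 1 := Nat.mul_div_cancel' hdvd
  have hpQ : ((p:ℚ)) ≠ 0 := by positivity
  have hQ : ((2 ^ (p - 1) - 1 : ℚ) / p) = (N : ℚ) := by
    rw [div_eq_iff hpQ]
    have := congrArg (Nat.cast : ℕ → ℚ) hN
    push_cast [Nat.cast_sub hpow] at this
    linear_combination -this
  set m := (p-1)/2 with hm
  have hmle : m ≤ p - 1 := by omega
  have h2k : 2*k ≤ p - 1 := by omega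
  -- the integer D
  set F : ℕ := (p-1).factorial with hF
  set D : ℤ := (SF p (m-k) : ℤ) + 2*N*F - 2*(SF p (2*k) : ℤ) + (SF p k : ℤ) with hD
  have hFq : (F : ℚ) ≠ 0 := by positivity
  have hFd : (F:ℚ) * (H (m - k) - (-2 * ((2 ^ (p - 1) - 1 : ℚ) / p) + 2 * H (2 * k) - H k))
      = (D : ℚ) := by
    rw [hQ, hD]
    have e1 := SF_q p (m-k) (by omega)
    have e2 := SF_q p (2*k) h2k
    have e3 := SF_q p k (by omega)
    push_cast at e1 e2 e3 ⊢
    linear_combination e1 - 2*e2 + e3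
  -- p divides D
  have hpD : (p : ℤ) ∣ D := by
    rw [← ZMod.intCast_zmod_eq_zero_iff_dvd, hD]
    push_cast
    rw [SF_zmod p (m-k) (by omega), SF_zmod p (2*k) h2k, SF_zmod p k (by omega)]
    have hkey := keyZMod hp hp3 k hk1 hk2 N hN
    rw [← hm] at hkey
    linear_combination ((F:ℕ) : ZMod p) * hkey
  obtain ⟨e, he⟩ := hpD
  refine ⟨(e : ℚ) / (F : ℚ), ?_, ?_⟩
  · intro hcon
    have hden : (((e:ℚ)/(F:ℚ)).den : ℤ) ∣ (F : ℤ) := by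
      rw [show ((F:ℕ):ℚ) = ((F:ℤ):ℚ) by push_cast; ring, ← Rat.divInt_eq_div]
      exact Rat.den_dvd e (F:ℤ)
    have : (p:ℤ) ∣ (F:ℤ) := dvd_trans hcon hden
    rw [Int.natCast_dvd_natCast] at this
    rw [hF, hp.dvd_factorial] at this
    omega
  · have : (F:ℚ) * (H (m - k) - (-2 * ((2 ^ (p - 1) - 1 : ℚ) / p) + 2 * H (2 * k) - H k))
        = (F:ℚ) * ((p:ℚ) * ((e:ℚ)/(F:ℚ))) := by
      rw [hFd, he]
      push_cast
      field_simp
      try ring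
    exact mul_left_cancel₀ hFq this
end

section
/- For any prime p ≥ 5 with p ≡ 1 (mod 3), the sum ∑_{k=0}^{(p-4)/3} 1/(3k+2) ≡ 0 (mod p). -/
lemma den_sum_not_dvd {p : ℕ} (hp : p.Prime) (s : Finset ℕ) (f : ℕ → ℚ)
    (h : ∀ k ∈ s, ¬ p ∣ (f k).den) : ¬ p ∣ (∑ k ∈ s, f k).den := by
  classical
  induction s using Finset.induction with
  | empty => simpa using hp.one_lt.ne'
  | @insert a s hn ih =>
    rw [Finset.sum_insert hn]
    intro hd
    have hdvd := Rat.add_den_dvd (f a) (∑ k ∈ s, f k)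
    rcases hp.dvd_mul.mp (hd.trans hdvd) with h' | h'
    · exact h a (Finset.mem_insert_self a s) h'
    · exact ih (fun k hk => h k (Finset.mem_insert_of_mem hk)) h'

theorem stmt2 (p : ℕ) (hp : p.Prime) (hp5 : 5 ≤ p) (h1 : p % 3 = 1) :
    ratCongr p (∑ k ∈ Finset.range ((p - 4) / 3 + 1), (1 : ℚ) / (3 * k + 2)) 0 := by
  set N := (p - 4) / 3 + 1 with hN
  have h3N : 3 * N = p - 1 := by omega
  set S := ∑ k ∈ Finset.range N, (1 : ℚ) / (3 * k + 2) with hS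
  have hrefl : S = ∑ k ∈ Finset.range N, (1 : ℚ) / ((p : ℚ) - (3 * k + 2)) := by
    rw [hS, ← Finset.sum_range_reflect]
    apply Finset.sum_congr rfl
    intro k hk
    have hk' : k < N := Finset.mem_range.mp hk
    have hle : 3 * k + 2 ≤ p := by omega
    have h2 : (3 * (N - 1 - k) + 2 : ℕ) = p - (3 * k + 2) := by omega
    have h3 : ((3 * (N - 1 - k) + 2 : ℕ) : ℚ) = (p : ℚ) - (3 * k + 2) := by
      rw [h2, Nat.cast_sub hle]; push_cast; ring
    congr 1
    exact_mod_cast h3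
  set T := ∑ k ∈ Finset.range N, (1 : ℚ) / ((3 * k + 2) * ((p : ℚ) - (3 * k + 2)))
    with hT
  have key : 2 * S = (p : ℚ) * T := by
    have h2S : 2 * S = S + S := by ring
    rw [h2S]
    nth_rewrite 2 [hrefl]
    rw [hS, hT, ← Finset.sum_add_distrib, Finset.mul_sum]
    apply Finset.sum_congr rfl
    intro k hk
    have hk' : k < N := Finset.mem_range.mp hk
    have h1' : (0:ℚ) < 3 * k + 2 := by positivity
    have h2' : (0:ℚ) < (p : ℚ) - (3 * k + 2) := by
      have hlt : 3 * k + 2 < p := by omega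
      have := (Nat.cast_lt (α := ℚ)).mpr hlt
      push_cast at this ⊢
      linarith
    field_simp
    try ring
  have hTden : ¬ p ∣ T.den := by
    rw [hT]
    apply den_sum_not_dvd hp
    intro k hk
    have hk' : k < N := Finset.mem_range.mp hk
    have hlt : 3 * k + 2 < p := by omega
    set m : ℕ := (3 * k + 2) * (p - (3 * k + 2)) with hm
    have hterm : (1 : ℚ) / ((3 * k + 2) * ((p : ℚ) - (3 * k + 2)))
        = ((1:ℤ) : ℚ) / ((m : ℤ) : ℚ) := by
      rw [hm]
      push_cast [Nat.cast_sub hlt.le]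
      ring_nf
    have hdd : (((1:ℤ) : ℚ) / ((m : ℤ) : ℚ)).den ∣ m := by
      have := Rat.den_dvd (1:ℤ) (m:ℤ)
      rw [Rat.divInt_eq_div] at this
      exact_mod_cast this
    rw [hterm]
    intro hd
    have hpm : p ∣ m := hd.trans hdd
    rcases (Nat.Prime.dvd_mul hp).mp hpm with h' | h'
    · exact absurd (Nat.le_of_dvd (by omega) h') (by omega)
    · exact absurd (Nat.le_of_dvd (by omega) h') (by omega)
  refine ⟨T / 2, ?_, ?_⟩
  · intro hd
    have hd' : p ∣ (T / 2).den := Int.natCast_dvd_natCast.mp hd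
    have hhalf : ((2 : ℚ)⁻¹).den = 2 := by norm_num [Rat.inv_def]
    have hdvd : (T / 2).den ∣ T.den * 2 := by
      rw [div_eq_mul_inv]
      have := Rat.mul_den_dvd T 2⁻¹
      rwa [hhalf] at this
    rcases (Nat.Prime.dvd_mul hp).mp (hd'.trans hdvd) with h' | h'
    · exact hTden h'
    · have := Nat.le_of_dvd (by norm_num) h'
      omega
  · rw [sub_zero]
    have hhalf : (p : ℚ) * (T / 2) = ((p : ℚ) * T) / 2 := by ring
    rw [hhalf]
    linarith [key]
end

section
/- For any prime p ≥ 5 with p ≡ 1 (mod 3), the sum ∑_{k=0}^{(p-4)/3} 1/(3k+1) ≡ q_3/2 (mod p), where q_3 = (3^{p-1}-1)/p is the Fermat quotient of 3. -/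
open Finset

-- nilpotent binomial
lemma aux_one_add_pow {R : Type*} [CommRing R] (x : R) (hx : x ^ 2 = 0) (N : ℕ) :
    (1 + x) ^ N = 1 + N * x := by
  induction N with
  | zero => simp
  | succ n ih =>
    rw [pow_succ, ih]
    push_cast
    linear_combination (n : R) * hx

-- block sums
lemma aux_sum_three {M : Type*} [AddCommMonoid M] (m : ℕ) (g : ℕ → M) :
    ∑ k ∈ range (3 * m), g k = ∑ j ∈ range m, (g (3 * j) + g (3 * j + 1) + g (3 * j + 2)) := by
  induction m with
  | zero => simp
  | succ m ih =>
    rw [show 3 * (m + 1) = 3 * m + 1 + 1 + 1 by ring, sum_range_succ, sum_range_succ,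
      sum_range_succ, ih, sum_range_succ]
    abel

-- dividing a congruence mod p^2 by p
lemma aux_div_p (p : ℕ) (hp : p.Prime) (a b : ℤ)
    (h : ((p * a : ℤ) : ZMod (p ^ 2)) = ((p * b : ℤ) : ZMod (p ^ 2))) :
    (a : ZMod p) = (b : ZMod p) := by
  rw [ZMod.intCast_eq_intCast_iff] at h ⊢
  have h2 : ((p ^ 2 : ℕ) : ℤ) ∣ (p * b - p * a) := Int.ModEq.dvd h
  have h3 : (p : ℤ) * (p : ℤ) ∣ (p : ℤ) * (b - a) := by
    push_cast at h2; convert h2 using 1 <;> ring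
  have hp0 : (p : ℤ) ≠ 0 := by exact_mod_cast hp.ne_zero
  have h4 : (p : ℤ) ∣ b - a := (mul_dvd_mul_iff_left hp0).mp h3
  exact (Int.modEq_iff_dvd.mpr h4)

-- choose (p-1) k ≡ (-1)^k
lemma aux_choose (p : ℕ) (hp : p.Prime) [Fact p.Prime] (M : ℕ) (hM : M + 1 = p) :
    ∀ k, k ≤ M → ((M.choose k : ℕ) : ZMod p) = (-1) ^ k := by
  intro k
  induction k with
  | zero => simp
  | succ k ih =>
    intro hk
    have hk' : k ≤ M := by omega
    have h0 := Nat.choose_succ_right_eq M k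
    have hcast : ((M - k : ℕ) : ZMod p) = -((k + 1 : ℕ) : ZMod p) := by
      have hs : (M - k : ℕ) + (k + 1) = p := by omega
      have := congrArg (Nat.cast : ℕ → ZMod p) hs
      rw [Nat.cast_add, ZMod.natCast_self] at this
      linear_combination this
    have h1 := congrArg (Nat.cast : ℕ → ZMod p) h0
    rw [Nat.cast_mul, Nat.cast_mul, hcast, ih hk'] at h1
    have hne : ((k + 1 : ℕ) : ZMod p) ≠ 0 := by
      rw [Ne, ZMod.natCast_eq_zero_iff]
      intro hdvd
      have := Nat.le_of_dvd (by omega) hdvd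
      omega
    apply mul_right_cancel₀ hne
    rw [h1]; push_cast; ring

lemma keyV (p n : ℕ) (hp : p.Prime) [Fact p.Prime] (hn : p = 6 * n + 1) (hn1 : 1 ≤ n)
    (q3 : ℤ) (hq3 : (p : ℤ) * q3 = 3 ^ (6 * n) - 1)
    (V : ℤ) (hV3 : ((V ^ 3 : ℤ) : ZMod (p ^ 2)) = 1) (hV1 : (V : ZMod p) ≠ 1) :
    2 * ∑ k ∈ Finset.range (6 * n), ((k + 1 : ℕ) : ZMod p)⁻¹ * (V : ZMod p) ^ (k + 1)
      = ((V : ZMod p) - 1) * (q3 : ZMod p) := by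
  have hp5 : 7 ≤ p := by omega
  have hpodd : Odd p := ⟨3 * n, by omega⟩
  have hpow : ∀ x : ZMod (p ^ 2), x ^ p = x ^ (6 * n + 1) :=
    fun x => congrArg (fun e : ℕ => x ^ e) hn
  set VR : ZMod (p ^ 2) := (V : ZMod (p ^ 2)) with hVR
  have hv3 : VR ^ 3 = 1 := by rw [hVR]; push_cast at hV3 ⊢; exact hV3
  -- reduce mod p
  have hV3p : ((V ^ 3 : ℤ) : ZMod p) = ((1 : ℤ) : ZMod p) := by
    rw [ZMod.intCast_eq_intCast_iff]
    have h' : (V ^ 3 : ℤ) ≡ 1 [ZMOD (p ^ 2 : ℕ)] :=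
      (ZMod.intCast_eq_intCast_iff _ _ _).mp (by exact_mod_cast hV3)
    exact h'.of_dvd (by push_cast; exact ⟨p, by ring⟩)
  set v : ZMod p := (V : ZMod p) with hv
  have hv3' : v ^ 3 = 1 := by rw [hv]; push_cast at hV3p ⊢; exact hV3p
  have hv0 : v ≠ 0 := by intro h; rw [h] at hv3'; simp at hv3'
  have hy : v - 1 ≠ 0 := sub_ne_zero.mpr hV1
  -- inverse of (VR - 1) in ZMod (p ^ 2)
  set Y : ℤ := (((v - 1)⁻¹).val : ℤ) with hY
  have hYc : ((Y : ZMod p)) = (v - 1)⁻¹ := by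
    rw [hY]; push_cast [ZMod.natCast_val, ZMod.cast_id]; rfl
  have hd : (((V - 1) * Y - 1 : ℤ) : ZMod p) = 0 := by
    push_cast [hYc]
    linear_combination mul_inv_cancel₀ hy
  obtain ⟨c, hc⟩ := (ZMod.intCast_zmod_eq_zero_iff_dvd _ _).mp hd
  have hpsq : ((p : ZMod (p ^ 2))) ^ 2 = 0 := by
    rw [← Nat.cast_pow]; exact ZMod.natCast_self (p ^ 2)
  set E : ZMod (p ^ 2) := ((Y * (1 - p * c) : ℤ) : ZMod (p ^ 2)) with hEdef
  have hcR : (VR - 1) * ((Y : ℤ) : ZMod (p ^ 2)) = 1 + (p : ZMod (p ^ 2)) * ((c : ℤ) : ZMod (p ^ 2)) := by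
    have := congrArg (fun z : ℤ => (z : ZMod (p ^ 2))) hc
    push_cast at this
    rw [hVR]; push_cast
    linear_combination this
  have hE : (VR - 1) * E = 1 := by
    rw [hEdef]; push_cast
    have : (VR - 1) * ((Y : ℤ) : ZMod (p ^ 2)) * (1 - (p : ZMod (p ^ 2)) * ((c : ℤ) : ZMod (p ^ 2)))
        = (1 + (p : ZMod (p ^ 2)) * c) * (1 - (p : ZMod (p ^ 2)) * c) := by rw [hcR]
    push_cast at this
    linear_combination this - ((c : ℤ) : ZMod (p ^ 2)) ^ 2 * hpsq
  -- (VR-1)^2 = -3 VR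
  have h3 : (VR - 1) ^ 3 = -3 * VR * (VR - 1) := by linear_combination hv3
  have h2 : (VR - 1) ^ 2 = -3 * VR := by
    linear_combination (-(VR - 1) ^ 2 - 3 * VR) * hE + E * h3
  -- t and s
  set t : ℤ := V ^ 2 - V with ht
  set tR : ZMod (p ^ 2) := ((t : ℤ) : ZMod (p ^ 2)) with htR
  have htRe : tR = VR ^ 2 - VR := by rw [htR, ht]; push_cast; rw [hVR]
  have ht2 : tR ^ 2 = -3 := by
    rw [htRe]; linear_combination VR ^ 2 * h2 - 3 * hv3
  have htp : ((t : ℤ) : ZMod p) ≠ 0 := by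
    rw [ht]; push_cast
    rw [show ((V : ZMod p) ^ 2 - V) = v * (v - 1) from by rw [hv]; ring]
    exact mul_ne_zero hv0 hy
  set s : ℤ := t ^ (6 * n) with hs
  have hs1 : ((s - 1 : ℤ) : ZMod p) = 0 := by
    have := ZMod.pow_card_sub_one_eq_one htp
    rw [show p - 1 = 6 * n from by omega] at this
    push_cast [hs]
    rw [show ((t : ZMod p)) ^ (6 * n) = 1 from by exact_mod_cast this]
    ring
  obtain ⟨τ, hτ⟩ := (ZMod.intCast_zmod_eq_zero_iff_dvd _ _).mp hs1
  -- powers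
  have hV3n : VR ^ (3 * n) = 1 := by rw [pow_mul, hv3, one_pow]
  have hsR : ((s : ℤ) : ZMod (p ^ 2)) = tR ^ (6 * n) := by rw [hs]; push_cast; rw [htR]
  have e1 : (-3 * VR) ^ (3 * n) = ((s : ℤ) : ZMod (p ^ 2)) := by
    rw [← ht2, mul_pow, ← pow_mul, show 2 * (3 * n) = 6 * n from by ring, hV3n, mul_one, hsR]
  have hV1p : (VR - 1) ^ p = (VR - 1) * ((s : ℤ) : ZMod (p ^ 2)) := by
    rw [hpow, pow_succ (VR - 1), show 6 * n = 2 * (3 * n) from by ring, pow_mul, h2, e1, mul_comm]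
  have hVpR : VR ^ p = VR := by
    rw [hpow, pow_succ VR, show 6 * n = 3 * (2 * n) from by ring, pow_mul, hv3, one_pow, one_mul]
  -- s = 1 + p τ  in ZMod (p ^ 2)
  have hsτ : ((s : ℤ) : ZMod (p ^ 2)) = 1 + (p : ZMod (p ^ 2)) * ((τ : ℤ) : ZMod (p ^ 2)) := by
    have := congrArg (fun z : ℤ => (z : ZMod (p ^ 2))) hτ
    push_cast at this
    linear_combination this
  -- s^2 = 3^(6n)
  have hs2 : ((s : ℤ) : ZMod (p ^ 2)) ^ 2 = (3 : ZMod (p ^ 2)) ^ (6 * n) := by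
    rw [hsR, ← pow_mul, show 6 * n * 2 = 2 * (6 * n) from by ring, pow_mul, ht2]
    exact Even.neg_pow ⟨3 * n, by ring⟩ 3
  have hq3R : (3 : ZMod (p ^ 2)) ^ (6 * n) = 1 + (p : ZMod (p ^ 2)) * ((q3 : ℤ) : ZMod (p ^ 2)) := by
    have := congrArg (fun z : ℤ => (z : ZMod (p ^ 2))) hq3
    push_cast at this
    linear_combination -this
  -- 2τ ≡ q3 mod p
  have h2τ : ((2 * τ : ℤ) : ZMod p) = ((q3 : ℤ) : ZMod p) := by
    apply aux_div_p p hp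
    push_cast
    have expand : (1 + (p : ZMod (p ^ 2)) * ((τ : ℤ) : ZMod (p ^ 2))) ^ 2
        = 1 + (p : ZMod (p ^ 2)) * (2 * ((τ : ℤ) : ZMod (p ^ 2))) + ((p : ZMod (p ^ 2))) ^ 2 * ((τ : ℤ) : ZMod (p ^ 2)) ^ 2 := by ring
    have := hs2
    rw [hsτ, hq3R, expand, hpsq] at this
    linear_combination this
  -- binomial identity over ℤ
  set d : ℕ → ℕ := fun j => p.choose j / p with hddef
  have hdd : ∀ k ∈ range (6 * n), (p.choose (k + 1) : ℤ) = (p : ℤ) * (d (k + 1) : ℤ) := by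
    intro k hk
    simp only [mem_range] at hk
    have hdvd : p ∣ p.choose (k + 1) := hp.dvd_choose_self (by omega) (by omega)
    exact_mod_cast congrArg (Nat.cast : ℕ → ℤ) (Nat.mul_div_cancel' hdvd).symm
  set EI : ℤ := ∑ k ∈ range (6 * n), (d (k + 1) : ℤ) * (-1) ^ k * V ^ (k + 1) with hEInt
  have hPE : 1 - V ^ p - (1 - V) ^ p = (p : ℤ) * EI := by
    have h1V : (1 - V) ^ p = ∑ k ∈ range (p + 1), (-V) ^ k * (p.choose k : ℤ) := by
      rw [show (1 - V : ℤ) = -V + 1 by ring, add_pow]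
      simp
    have hoddV : (-V : ℤ) ^ p = -(V ^ p) := hpodd.neg_pow V
    have hsum_eq : ∑ k ∈ range (6 * n), (-V) ^ (k + 1) * (p.choose (k + 1) : ℤ)
        = -((p : ℤ) * EI) := by
      rw [hEInt, mul_sum, ← Finset.sum_neg_distrib]
      apply sum_congr rfl
      intro k hk
      rw [hdd k hk, neg_pow, pow_succ]
      ring
    have hsplit : ∑ k ∈ range (p + 1), (-V) ^ k * (p.choose k : ℤ)
        = (∑ k ∈ range (6 * n), (-V) ^ (k + 1) * (p.choose (k + 1) : ℤ)) + 1 - V ^ p := by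
      rw [sum_range_succ, show range p = range (6 * n + 1) from by rw [hn], sum_range_succ',
        Nat.choose_self, hoddV]
      simp [Nat.choose_zero_right]
      ring
    rw [h1V, hsplit, hsum_eq]
    ring
  -- evaluate in ZMod (p ^ 2)
  have hA : (1 - VR) ^ p = -((VR - 1) * ((s : ℤ) : ZMod (p ^ 2))) := by
    rw [show (1 : ZMod (p ^ 2)) - VR = -(VR - 1) by ring, hpodd.neg_pow, hV1p]
  have hL : ((1 - V ^ p - (1 - V) ^ p : ℤ) : ZMod (p ^ 2)) = ((p * ((V - 1) * τ) : ℤ) : ZMod (p ^ 2)) := by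
    push_cast
    linear_combination (-1 : ZMod (p ^ 2)) * hVpR - hA + (VR - 1) * hsτ
  have hEτ : ((EI : ℤ) : ZMod p) = (((V - 1) * τ : ℤ) : ZMod p) := by
    apply aux_div_p p hp
    have hcastPE := congrArg (fun z : ℤ => (z : ZMod (p ^ 2))) hPE
    exact hcastPE.symm.trans hL
  -- inverse formula for d
  have hdinv : ∀ k ∈ range (6 * n), ((d (k + 1) : ℕ) : ZMod p) * (-1) ^ k
      = ((k + 1 : ℕ) : ZMod p)⁻¹ := by
    intro k hk
    simp only [mem_range] at hk
    have hdvd : p ∣ p.choose (k + 1) := hp.dvd_choose_self (by omega) (by omega)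
    have hpd : p * d (k + 1) = p.choose (k + 1) := Nat.mul_div_cancel' hdvd
    have hnd : (k + 1) * d (k + 1) = Nat.choose (6 * n) k := by
      apply Nat.eq_of_mul_eq_mul_left hp.pos
      have h0 := Nat.add_one_mul_choose_eq (6 * n) k
      rw [show 6 * n + 1 = p from by omega] at h0
      calc p * ((k + 1) * d (k + 1)) = (k + 1) * (p * d (k + 1)) := by ring
        _ = (k + 1) * p.choose (k + 1) := by rw [hpd]
        _ = p * Nat.choose (6 * n) k := by rw [h0]; ring
    have hC : ((Nat.choose (6 * n) k : ℕ) : ZMod p) = (-1) ^ k :=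
      aux_choose p hp (6 * n) (by omega) k (by omega)
    have hcast : ((k + 1 : ℕ) : ZMod p) * ((d (k + 1) : ℕ) : ZMod p) = (-1) ^ k := by
      rw [← Nat.cast_mul, hnd, hC]
    have hsq : ((-1 : ZMod p)) ^ k * (-1) ^ k = 1 := by
      rw [← pow_add]
      exact Even.neg_one_pow ⟨k, by ring⟩
    have hone : ((k + 1 : ℕ) : ZMod p) * (((d (k + 1) : ℕ) : ZMod p) * (-1) ^ k) = 1 := by
      linear_combination ((-1 : ZMod p)) ^ k * hcast + hsq
    exact (inv_eq_of_mul_eq_one_right hone).symm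
  have hEp : ((EI : ℤ) : ZMod p) = ∑ k ∈ range (6 * n), ((k + 1 : ℕ) : ZMod p)⁻¹ * v ^ (k + 1) := by
    rw [hEInt, Int.cast_sum]
    apply sum_congr rfl
    intro k hk
    rw [← hdinv k hk]
    push_cast
    ring
  have hfin : (((V - 1) * τ : ℤ) : ZMod p) = (v - 1) * ((τ : ℤ) : ZMod p) := by
    push_cast
    rw [hv]
  have h2τ' : (2 : ZMod p) * ((τ : ℤ) : ZMod p) = ((q3 : ℤ) : ZMod p) := by
    push_cast at h2τ
    linear_combination h2τ
  rw [← hEp, hEτ, hfin]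
  linear_combination (v - 1) * h2τ'

-- sum of inverses of nonzero residues vanishes
lemma aux_inv_sum (p n : ℕ) (hp : p.Prime) [Fact p.Prime] (hn : p = 6 * n + 1) (hn1 : 1 ≤ n) :
    ∑ k ∈ range (6 * n), ((k + 1 : ℕ) : ZMod p)⁻¹ = 0 := by
  have hp5 : 7 ≤ p := by omega
  -- reindexing lemma
  have hreindex : ∀ f : ZMod p → ZMod p,
      ∑ k ∈ range (6 * n), f ((k + 1 : ℕ) : ZMod p) = ∑ x ∈ (univ.erase (0 : ZMod p)), f x := by
    intro f
    apply Finset.sum_nbij' (i := fun k => ((k + 1 : ℕ) : ZMod p)) (j := fun x => x.val - 1)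
    · intro k hk
      simp only [mem_range] at hk
      simp only [mem_erase, mem_univ, and_true]
      rw [Ne, ZMod.natCast_eq_zero_iff]
      intro hdvd
      have := Nat.le_of_dvd (by omega) hdvd
      omega
    · intro x hx
      simp only [mem_erase, mem_univ, and_true] at hx
      simp only [mem_range]
      have h1 : x.val ≠ 0 := fun h => hx ((ZMod.val_eq_zero x).mp h)
      have h2 : x.val < p := ZMod.val_lt x
      omega
    · intro k hk
      simp only [mem_range] at hk
      rw [ZMod.val_cast_of_lt (by omega)]
      omega
    · intro x hx
      simp only [mem_erase, mem_univ, and_true] at hx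
      have h1 : x.val ≠ 0 := fun h => hx ((ZMod.val_eq_zero x).mp h)
      rw [show x.val - 1 + 1 = x.val from by omega]
      simp [ZMod.natCast_val, ZMod.cast_id]
    · intro k hk
      rfl
  -- value sums
  have hnat : (∑ k ∈ range (6 * n), (k + 1)) * 2 = p * (6 * n) := by
    have h1 := Finset.sum_range_id_mul_two (6 * n + 1)
    have h2 : ∑ i ∈ range (6 * n + 1), i = ∑ k ∈ range (6 * n), (k + 1) := by
      rw [Finset.sum_range_succ']
      simp
    rw [h2, show 6 * n + 1 - 1 = 6 * n from by omega] at h1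
    rw [h1, hn]
  have hdvdsum : p ∣ ∑ k ∈ range (6 * n), (k + 1) := by
    have hcop : Nat.Coprime p 2 := (Nat.coprime_primes hp Nat.prime_two).mpr (by omega)
    refine hcop.dvd_of_dvd_mul_right ?_
    rw [hnat]
    exact dvd_mul_right _ _
  have hvalsum : ∑ k ∈ range (6 * n), ((k + 1 : ℕ) : ZMod p) = 0 := by
    rw [← Nat.cast_sum, ZMod.natCast_eq_zero_iff]
    exact hdvdsum
  have hinv_id : ∑ x ∈ (univ.erase (0 : ZMod p)), x⁻¹ = ∑ x ∈ (univ.erase (0 : ZMod p)), x := by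
    apply Finset.sum_nbij' (i := fun x : ZMod p => x⁻¹) (j := fun x : ZMod p => x⁻¹)
    · intro x hx
      simp only [mem_erase, mem_univ, and_true] at hx ⊢
      exact inv_ne_zero hx
    · intro x hx
      simp only [mem_erase, mem_univ, and_true] at hx ⊢
      exact inv_ne_zero hx
    · intro x _; exact inv_inv x
    · intro x _; exact inv_inv x
    · intro x _; rfl
  calc ∑ k ∈ range (6 * n), ((k + 1 : ℕ) : ZMod p)⁻¹
      = ∑ x ∈ (univ.erase (0 : ZMod p)), x⁻¹ := hreindex (fun x => x⁻¹)
    _ = ∑ x ∈ (univ.erase (0 : ZMod p)), x := hinv_id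
    _ = ∑ k ∈ range (6 * n), ((k + 1 : ℕ) : ZMod p) := (hreindex id).symm
    _ = 0 := hvalsum

lemma core (p n : ℕ) (hp : p.Prime) [Fact p.Prime] (hn : p = 6 * n + 1) (hn1 : 1 ≤ n)
    (q3 : ℤ) (hq3 : (p : ℤ) * q3 = 3 ^ (6 * n) - 1) :
    2 * ∑ j ∈ range (2 * n), ((3 * j + 1 : ℕ) : ZMod p)⁻¹ = (q3 : ZMod p) := by
  have hp5 : 7 ≤ p := by omega
  -- a cube root of unity in ZMod p
  have hcard : 3 ∣ Fintype.card (ZMod p)ˣ := by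
    rw [ZMod.card_units_eq_totient, Nat.totient_prime hp]
    exact ⟨2 * n, by omega⟩
  obtain ⟨g, hg⟩ := exists_prime_orderOf_dvd_card 3 hcard
  set w₁ : ZMod p := (g : ZMod p) with hw₁
  have hw3 : w₁ ^ 3 = 1 := by
    rw [hw₁, ← Units.val_pow_eq_pow_val, ← hg, pow_orderOf_eq_one, Units.val_one]
  have hw1 : w₁ ≠ 1 := by
    intro h
    have : g = 1 := Units.ext h
    rw [this, orderOf_one] at hg
    omega
  set w0 : ℤ := (w₁.val : ℤ) with hw0def
  have hw0 : ((w0 : ℤ) : ZMod p) = w₁ := by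
    rw [hw0def]; push_cast [ZMod.natCast_val, ZMod.cast_id]; rfl
  have hcube : ((w0 ^ 3 - 1 : ℤ) : ZMod p) = 0 := by
    push_cast [hw0]
    rw [hw3]; ring
  obtain ⟨a, ha⟩ := (ZMod.intCast_zmod_eq_zero_iff_dvd _ _).mp hcube
  set W : ℤ := w0 ^ p with hWdef
  have hpsq : ((p : ZMod (p ^ 2))) ^ 2 = 0 := by
    rw [← Nat.cast_pow]; exact ZMod.natCast_self (p ^ 2)
  have hW3 : ((W ^ 3 : ℤ) : ZMod (p ^ 2)) = 1 := by
    have e1 : W ^ 3 = (1 + p * a) ^ p := by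
      rw [hWdef, ← pow_mul, show p * 3 = 3 * p from by ring, pow_mul]
      congr 1
      omega
    rw [e1]
    push_cast
    rw [show (1 : ZMod (p ^ 2)) + (p : ZMod (p ^ 2)) * (a : ZMod (p ^ 2))
        = 1 + ((p : ZMod (p ^ 2)) * (a : ZMod (p ^ 2))) from rfl]
    rw [aux_one_add_pow _ (by linear_combination ((a : ZMod (p ^ 2))) ^ 2 * hpsq) p]
    rw [show ((p : ℕ) : ZMod (p ^ 2)) * ((p : ZMod (p ^ 2)) * (a : ZMod (p ^ 2)))
        = ((p : ZMod (p ^ 2))) ^ 2 * (a : ZMod (p ^ 2)) from by push_cast; ring, hpsq]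
    ring
  set u : ZMod p := ((W : ℤ) : ZMod p) with hu
  have huw : u = w₁ := by
    rw [hu, hWdef]
    push_cast
    rw [show ((w0 : ℤ) : ZMod p) = w₁ from hw0, ZMod.pow_card]
  have hu1 : u ≠ 1 := by rw [huw]; exact hw1
  have hu3 : u ^ 3 = 1 := by rw [huw]; exact hw3
  have huu : 1 + u + u ^ 2 = 0 := by
    have h0 : (u - 1) * (u ^ 2 + u + 1) = 0 := by linear_combination hu3
    rcases mul_eq_zero.mp h0 with h | h
    · exact absurd (sub_eq_zero.mp h) hu1
    · linear_combination h
  -- the two key congruences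
  have k1 := keyV p n hp hn hn1 q3 hq3 W hW3 (by rw [← hu]; exact hu1)
  have hW23 : (((W ^ 2) ^ 3 : ℤ) : ZMod (p ^ 2)) = 1 := by
    rw [show (W ^ 2) ^ 3 = (W ^ 3) ^ 2 from by ring]
    push_cast at hW3 ⊢
    rw [hW3]; ring
  have hu2 : ((W ^ 2 : ℤ) : ZMod p) = u ^ 2 := by rw [hu]; push_cast; ring
  have hu21 : ((W ^ 2 : ℤ) : ZMod p) ≠ 1 := by
    rw [hu2]
    intro h
    apply hu1
    have : u ^ 4 = u := by rw [show 4 = 3 + 1 from rfl, pow_succ, hu3, one_mul]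
    rw [show u ^ 4 = (u ^ 2) ^ 2 from by ring, h, one_pow] at this
    exact this.symm
  have k2 := keyV p n hp hn hn1 q3 hq3 (W ^ 2) hW23 hu21
  rw [hu2] at k2
  rw [← hu] at k1
  -- sums
  set SB : ZMod p := ∑ j ∈ range (2 * n), ((3 * j + 1 : ℕ) : ZMod p)⁻¹ with hSB
  set Fu : ZMod p := ∑ k ∈ range (6 * n), ((k + 1 : ℕ) : ZMod p)⁻¹ * u ^ (k + 1) with hFu
  set Fu2 : ZMod p := ∑ k ∈ range (6 * n), ((k + 1 : ℕ) : ZMod p)⁻¹ * (u ^ 2) ^ (k + 1) with hFu2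
  have hF1 := aux_inv_sum p n hp hn hn1
  -- filter identity
  set gf : ℕ → ZMod p := fun k => ((k + 1 : ℕ) : ZMod p)⁻¹ * (1 + u ^ k + u ^ (2 * k)) with hgf
  have ha' : ∑ k ∈ range (6 * n), gf k
      = (∑ k ∈ range (6 * n), ((k + 1 : ℕ) : ZMod p)⁻¹) + u ^ 2 * Fu + u * Fu2 := by
    rw [hFu, hFu2, Finset.mul_sum, Finset.mul_sum, ← Finset.sum_add_distrib,
      ← Finset.sum_add_distrib]
    apply sum_congr rfl
    intro k hk
    have e1 : u ^ 2 * u ^ (k + 1) = u ^ k := by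
      rw [← pow_add, show 2 + (k + 1) = k + 3 from by ring, pow_add, hu3, mul_one]
    have e2 : u * (u ^ 2) ^ (k + 1) = u ^ (2 * k) := by
      rw [← pow_mul, ← pow_succ', show 2 * (k + 1) + 1 = 2 * k + 3 from by ring, pow_add,
        hu3, mul_one]
    rw [hgf]
    simp only []
    linear_combination (-(((k + 1 : ℕ) : ZMod p)⁻¹)) * e1 - (((k + 1 : ℕ) : ZMod p)⁻¹) * e2
  have hb : ∑ k ∈ range (6 * n), gf k = 3 * SB := by
    have h0 := aux_sum_three (2 * n) gf
    rw [show 3 * (2 * n) = 6 * n from by ring] at h0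
    rw [h0, hSB, Finset.mul_sum]
    apply sum_congr rfl
    intro j hj
    have e0 : u ^ (3 * j) = 1 := by rw [pow_mul, hu3, one_pow]
    have e1 : u ^ (2 * (3 * j)) = 1 := by
      rw [show 2 * (3 * j) = 3 * (2 * j) from by ring, pow_mul, hu3, one_pow]
    have e2 : u ^ (3 * j + 1) = u := by rw [pow_succ, e0, one_mul]
    have e3 : u ^ (2 * (3 * j + 1)) = u ^ 2 := by
      rw [show 2 * (3 * j + 1) = 3 * (2 * j) + 2 from by ring, pow_add, pow_mul, hu3, one_pow,
        one_mul]
    have e4 : u ^ (3 * j + 2) = u ^ 2 := by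
      rw [pow_add, e0, one_mul]
    have e5 : u ^ (2 * (3 * j + 2)) = u := by
      rw [show 2 * (3 * j + 2) = 3 * (2 * j + 1) + 1 from by ring, pow_succ, pow_mul, hu3,
        one_pow, one_mul]
    rw [hgf]
    simp only []
    rw [e0, e1, e2, e3, e4, e5]
    have hz1 : ((3 * j + 1 + 1 : ℕ) : ZMod p)⁻¹ * (1 + u + u ^ 2) = 0 := by
      rw [show (1 : ZMod p) + u + u ^ 2 = 0 from huu, mul_zero]
    have hz2 : ((3 * j + 2 + 1 : ℕ) : ZMod p)⁻¹ * (1 + u ^ 2 + u) = 0 := by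
      rw [show (1 : ZMod p) + u ^ 2 + u = 0 from by linear_combination huu, mul_zero]
    rw [hz1, hz2]
    ring
  have hcomb : 3 * SB = u ^ 2 * Fu + u * Fu2 := by
    rw [← hb, ha', hF1, zero_add]
  have h3ne : (3 : ZMod p) ≠ 0 := by
    rw [show (3 : ZMod p) = ((3 : ℕ) : ZMod p) from by push_cast; rfl, Ne,
      ZMod.natCast_eq_zero_iff]
    intro hdvd
    have := Nat.le_of_dvd (by omega) hdvd
    omega
  apply mul_left_cancel₀ h3ne
  linear_combination 2 * hcomb + u ^ 2 * k1 + u * k2 + 2 * ((q3 : ℤ) : ZMod p) * hu3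
    - ((q3 : ℤ) : ZMod p) * huu

lemma aux_rat_sum (p : ℕ) (hp : p.Prime) [Fact p.Prime] (s : Finset ℕ) (f : ℕ → ℚ)
    (h : ∀ k ∈ s, ((f k).den : ZMod p) ≠ 0) :
    (((∑ k ∈ s, f k).den : ℕ) : ZMod p) ≠ 0 ∧
      (((∑ k ∈ s, f k : ℚ)) : ZMod p) = ∑ k ∈ s, ((f k : ℚ) : ZMod p) := by
  classical
  induction s using Finset.cons_induction with
  | empty => simp
  | cons a s ha ih =>
    have hs := ih (fun k hk => h k (Finset.mem_cons_of_mem hk))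
    have hfa := h a (Finset.mem_cons_self a s)
    have hden : (((f a + ∑ k ∈ s, f k).den : ℕ) : ZMod p) ≠ 0 := by
      intro h0
      rw [ZMod.natCast_eq_zero_iff] at h0
      have hdd : p ∣ (f a).den * (∑ k ∈ s, f k).den :=
        dvd_trans h0 (Rat.add_den_dvd (f a) (∑ k ∈ s, f k))
      rcases (Nat.Prime.dvd_mul hp).mp hdd with h' | h'
      · exact hfa (by rw [ZMod.natCast_eq_zero_iff]; exact h')
      · exact hs.1 (by rw [ZMod.natCast_eq_zero_iff]; exact h')
    constructor
    · rw [Finset.sum_cons]; exact hden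
    · rw [Finset.sum_cons, Finset.sum_cons, Rat.cast_add_of_ne_zero hfa hs.1, hs.2]

theorem stmt3 (p : ℕ) (hp : p.Prime) (hp5 : 5 ≤ p) (h1 : p % 3 = 1) :
    ratCongr p (∑ k ∈ Finset.range ((p - 4) / 3 + 1), (1 : ℚ) / (3 * k + 1))
      (((3 ^ (p - 1) - 1 : ℚ) / p) / 2) := by
  haveI : Fact p.Prime := ⟨hp⟩
  obtain ⟨m, hm⟩ := hp.odd_of_ne_two (by omega)
  obtain ⟨n, hn⟩ : ∃ n, p = 6 * n + 1 := ⟨p / 6, by omega⟩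
  have hn1 : 1 ≤ n := by omega
  have hp7 : 7 ≤ p := by omega
  -- Fermat quotient
  have h3ne : ((3 : ℤ) : ZMod p) ≠ 0 := by
    rw [Ne, ZMod.intCast_zmod_eq_zero_iff_dvd]
    intro hdvd
    have := Int.le_of_dvd (by norm_num) hdvd
    omega
  have hfermat : ((3 ^ (6 * n) - 1 : ℤ) : ZMod p) = 0 := by
    have := ZMod.pow_card_sub_one_eq_one h3ne
    rw [show p - 1 = 6 * n from by omega] at this
    push_cast at this ⊢
    linear_combination this
  obtain ⟨q3, hq3⟩ := (ZMod.intCast_zmod_eq_zero_iff_dvd _ _).mp hfermat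
  have hq3' : (p : ℤ) * q3 = 3 ^ (6 * n) - 1 := hq3.symm
  have hcore := core p n hp hn hn1 q3 hq3'
  rw [show (p - 4) / 3 + 1 = 2 * n from by omega, show p - 1 = 6 * n from by omega]
  set X : ℚ := ∑ k ∈ Finset.range (2 * n), (1 : ℚ) / (3 * k + 1) with hX
  set Y : ℚ := ((3 ^ (6 * n) - 1 : ℚ) / p) / 2 with hY
  have hp0 : (p : ℚ) ≠ 0 := by positivity
  have hYq : Y = (q3 : ℚ) / 2 := by
    rw [hY]
    have e : ((3 : ℚ) ^ (6 * n) - 1) = (p : ℚ) * (q3 : ℚ) := by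
      exact_mod_cast congrArg (fun z : ℤ => (z : ℚ)) hq3
    rw [e, mul_div_cancel_left₀ _ hp0]
  -- term facts
  have hterm : ∀ k ∈ Finset.range (2 * n),
      (((fun k : ℕ => (1 : ℚ) / (3 * k + 1)) k).den : ZMod p) ≠ 0 := by
    intro k hk
    simp only [Finset.mem_range] at hk
    have hre : (1 : ℚ) / (3 * k + 1) = ((1 : ℤ) : ℚ) / ((3 * k + 1 : ℤ) : ℚ) := by push_cast; ring
    have hdvd : (((1 : ℚ) / (3 * k + 1)).den : ℤ) ∣ (3 * k + 1 : ℤ) := by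
      rw [hre, ← Rat.divInt_eq_div]
      exact Rat.den_dvd 1 (3 * k + 1)
    intro h0
    rw [ZMod.natCast_eq_zero_iff] at h0
    have hpk : (p : ℤ) ∣ (3 * k + 1 : ℤ) := dvd_trans (by exact_mod_cast h0) hdvd
    have := Int.le_of_dvd (by positivity) hpk
    omega
  have hXfacts := aux_rat_sum p hp (Finset.range (2 * n)) (fun k => (1 : ℚ) / (3 * k + 1)) hterm
  have hXden : ((X.den : ℕ) : ZMod p) ≠ 0 := by rw [hX]; exact hXfacts.1
  -- cast of each term
  have hcastterm : ∀ k ∈ Finset.range (2 * n),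
      (((1 : ℚ) / (3 * k + 1) : ℚ) : ZMod p) = ((3 * k + 1 : ℕ) : ZMod p)⁻¹ := by
    intro k hk
    simp only [Finset.mem_range] at hk
    have hre : (1 : ℚ) / (3 * k + 1) = (((3 * k + 1 : ℕ) : ℚ))⁻¹ := by push_cast; ring
    have hnum : ((((3 * k + 1 : ℕ) : ℚ)).num : ZMod p) ≠ 0 := by
      rw [Rat.num_natCast, Int.cast_natCast, Ne, ZMod.natCast_eq_zero_iff]
      intro hdvd
      have := Nat.le_of_dvd (by omega) hdvd
      omega
    rw [hre, Rat.cast_inv_of_ne_zero hnum, Rat.cast_natCast]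
  -- Y facts
  have h2z : (2 : ZMod p) ≠ 0 := by
    have h : ((2 : ℕ) : ZMod p) ≠ 0 := by
      rw [Ne, ZMod.natCast_eq_zero_iff]
      intro hdvd
      have := Nat.le_of_dvd (by omega) hdvd
      omega
    exact_mod_cast h
  have hYden : ((Y.den : ℕ) : ZMod p) ≠ 0 := by
    rw [hYq]
    have hdvd : (((q3 : ℚ) / 2).den : ℤ) ∣ (2 : ℤ) := by
      rw [show ((q3 : ℚ) / 2 : ℚ) = ((q3 : ℚ)) / (((2 : ℤ)) : ℚ) from by push_cast; ring,
        ← Rat.divInt_eq_div]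
      exact Rat.den_dvd q3 2
    intro h0
    rw [ZMod.natCast_eq_zero_iff] at h0
    have hd2 : (p : ℤ) ∣ 2 := dvd_trans (by exact_mod_cast h0) hdvd
    have := Int.le_of_dvd (by norm_num) hd2
    omega
  have hYcast : ((Y : ℚ) : ZMod p) = ((q3 : ℤ) : ZMod p) / (2 : ZMod p) := by
    rw [hYq, show ((2 : ℚ)) = (((2 : ℕ)) : ℚ) from by norm_num]
    rw [Rat.cast_div_of_ne_zero
      (by rw [Rat.den_intCast]; exact_mod_cast (one_ne_zero : (1 : ZMod p) ≠ 0))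
      (by rw [Rat.num_natCast]; exact_mod_cast h2z)]
    rw [Rat.cast_intCast, Rat.cast_natCast]
    norm_num
  -- X cast
  have hXcast : ((X : ℚ) : ZMod p) = ∑ j ∈ Finset.range (2 * n), ((3 * j + 1 : ℕ) : ZMod p)⁻¹ := by
    rw [hX, hXfacts.2]
    exact Finset.sum_congr rfl hcastterm
  -- difference
  have hsubden : (((X - Y).den : ℕ) : ZMod p) ≠ 0 := by
    have hdvd := Rat.add_den_dvd X (-Y)
    rw [Rat.den_neg_eq_den] at hdvd
    rw [← sub_eq_add_neg] at hdvd
    intro h0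
    rw [ZMod.natCast_eq_zero_iff] at h0
    have hXY : p ∣ X.den * Y.den := dvd_trans h0 hdvd
    rcases (Nat.Prime.dvd_mul hp).mp hXY with h' | h'
    · exact hXden (by rw [ZMod.natCast_eq_zero_iff]; exact h')
    · exact hYden (by rw [ZMod.natCast_eq_zero_iff]; exact h')
  have hzero : (((X - Y : ℚ)) : ZMod p) = 0 := by
    rw [Rat.cast_sub_of_ne_zero hXden hYden, hXcast, hYcast]
    have hSd : (∑ j ∈ Finset.range (2 * n), ((3 * j + 1 : ℕ) : ZMod p)⁻¹)
        = ((q3 : ℤ) : ZMod p) / 2 := by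
      rw [eq_div_iff h2z]
      linear_combination hcore
    rw [hSd]
    ring
  have hnumdvd : (p : ℤ) ∣ (X - Y).num := by
    rw [← ZMod.intCast_zmod_eq_zero_iff_dvd]
    have hdef : (((X - Y).num : ℤ) : ZMod p) / (((X - Y).den : ℕ) : ZMod p) = 0 := by
      rw [← Rat.cast_def]
      exact hzero
    rcases div_eq_zero_iff.mp hdef with h | h
    · exact h
    · exact absurd h hsubden
  obtain ⟨A, hA⟩ := hnumdvd
  refine ⟨(A : ℚ) / (((X - Y).den : ℕ) : ℚ), ?_, ?_⟩
  · have hrd : (((A : ℚ) / (((X - Y).den : ℕ) : ℚ)).den : ℤ) ∣ (((X - Y).den : ℕ) : ℤ) := by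
      rw [show ((((X - Y).den : ℕ)) : ℚ) = (((((X - Y).den : ℕ)) : ℤ) : ℚ) from by push_cast; rfl,
        ← Rat.divInt_eq_div]
      exact Rat.den_dvd A _
    intro hdv
    have hpd : (p : ℤ) ∣ (((X - Y).den : ℕ) : ℤ) := dvd_trans hdv hrd
    apply hsubden
    rw [ZMod.natCast_eq_zero_iff]
    exact_mod_cast hpd
  · conv_lhs => rw [← Rat.num_div_den (X - Y)]
    rw [hA]
    push_cast
    ring
end

section
/- For any prime p ≥ 5 with p ≡ 1 (mod 6), the sum ∑_{k=0}^{(p-1)/6} 1/(2k+1) ≡ q_2 - (3/4) q_3 + 3/2 (mod p), where q_a = (a^{p-1}-1)/p. -/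
open Finset

lemma prod_one_add {R : Type*} [CommRing R] (c : R) (hc : c * c = 0)
    (s : Finset ℕ) (f : ℕ → R) :
    ∏ i ∈ s, (1 + c * f i) = 1 + c * ∑ i ∈ s, f i := by
  induction s using Finset.cons_induction with
  | empty => simp
  | cons a s ha ih =>
    rw [Finset.prod_cons, ih, Finset.sum_cons]
    have h : (1 + c * f a) * (1 + c * ∑ i ∈ s, f i)
        = 1 + c * (f a + ∑ i ∈ s, f i) + (c * c) * (f a * ∑ i ∈ s, f i) := by ring
    rw [h, hc]; ring

lemma nat_eq_of_cast {p u v : ℕ} (hu : u < p) (hv : v < p) (h : (u : ZMod p) = v) : u = v := by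
  haveI : NeZero p := ⟨by omega⟩
  rw [← ZMod.val_cast_of_lt hu, ← ZMod.val_cast_of_lt hv, h]

lemma mem_aux {p : ℕ} (hp : p.Prime) {x k : ℕ} (hx : ¬ p ∣ x) (hk : k ∈ Ioc 0 (p-1)) :
    k * x % p ∈ Ioc 0 (p-1) := by
  have hp0 : 0 < p := hp.pos
  have h1 : ¬ p ∣ k * x := by
    intro h
    rcases (hp.dvd_mul).1 h with h' | h'
    · have := Nat.le_of_dvd (by simp at hk; omega) h'
      simp at hk; omega
    · exact hx h'
  have h2 : k * x % p ≠ 0 := fun h => h1 ((Nat.dvd_iff_mod_eq_zero).2 h)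
  have h3 : k * x % p < p := Nat.mod_lt _ hp0
  simp only [mem_Ioc]; omega

lemma inv_aux {p : ℕ} (hp : p.Prime) {x y k : ℕ} (hk : k ∈ Ioc 0 (p-1))
    (hxy : (x : ZMod p) * (y : ZMod p) = 1) : k * x % p * y % p = k := by
  have hp0 : 0 < p := hp.pos
  haveI : NeZero p := ⟨hp0.ne'⟩
  apply nat_eq_of_cast (Nat.mod_lt _ hp0) (by simp at hk; omega)
  push_cast [ZMod.natCast_mod]
  rw [mul_assoc, hxy, mul_one]

lemma prod_mod_perm {p : ℕ} (hp : p.Prime) {a : ℕ} (ha : ¬ p ∣ a)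
    {M : Type*} [CommMonoid M] (g : ℕ → M) :
    ∏ k ∈ Ioc 0 (p-1), g (k * a % p) = ∏ k ∈ Ioc 0 (p-1), g k := by
  haveI : Fact p.Prime := ⟨hp⟩
  haveI : NeZero p := ⟨hp.pos.ne'⟩
  have hane : (a : ZMod p) ≠ 0 := by
    simpa [ZMod.natCast_eq_zero_iff] using ha
  set b := ((a : ZMod p)⁻¹).val with hbdef
  have hbcast : (b : ZMod p) = (a : ZMod p)⁻¹ := by
    rw [hbdef, ZMod.natCast_val, ZMod.cast_id]
  have hab : (a : ZMod p) * (b : ZMod p) = 1 := by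
    rw [hbcast, mul_inv_cancel₀ hane]
  have hb : ¬ p ∣ b := by
    intro h
    have : (b : ZMod p) = 0 := by simpa [ZMod.natCast_eq_zero_iff] using h
    rw [this, mul_zero] at hab
    exact zero_ne_one hab
  refine Finset.prod_nbij' (fun k => k * a % p) (fun k => k * b % p)
    (fun k hk => mem_aux hp ha hk) (fun k hk => mem_aux hp hb hk)
    (fun k hk => inv_aux hp hk hab) (fun k hk => inv_aux hp hk (by rw [mul_comm]; exact hab))
    (fun k hk => rfl)

def fq (p a : ℕ) : ℤ := ((a : ℤ)^(p-1) - 1) / p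

lemma fq_spec {p a : ℕ} (hp : p.Prime) (ha : ¬ p ∣ a) :
    (p : ℤ) * fq p a = (a : ℤ)^(p-1) - 1 := by
  haveI : Fact p.Prime := ⟨hp⟩
  have hane : (a : ZMod p) ≠ 0 := by
    simpa [ZMod.natCast_eq_zero_iff] using ha
  have hdvd : (p : ℤ) ∣ (a : ℤ)^(p-1) - 1 := by
    rw [← ZMod.intCast_zmod_eq_zero_iff_dvd]
    push_cast
    rw [ZMod.pow_card_sub_one_eq_one hane]
    ring
  exact Int.mul_ediv_cancel' hdvd

lemma descend {p : ℕ} (hp : p.Prime) (x : ℤ) (y : ℕ)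
    (h : (p : ZMod (p^2)) * (x : ZMod (p^2)) = (p : ZMod (p^2)) * (y : ZMod (p^2))) :
    (x : ZMod p) = (y : ZMod p) := by
  have h2 : (((p : ℤ) * x : ℤ) : ZMod (p^2)) = (((p : ℤ) * (y : ℤ) : ℤ) : ZMod (p^2)) := by
    push_cast at h ⊢; exact h
  have h3 : ((p^2 : ℕ) : ℤ) ∣ (p : ℤ) * (y : ℤ) - (p : ℤ) * x :=
    Int.ModEq.dvd ((ZMod.intCast_eq_intCast_iff _ _ _).1 h2)
  have h4 : (p : ℤ) ∣ (y : ℤ) - x := by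
    have h5 : (p : ℤ) * (p : ℤ) ∣ (p : ℤ) * ((y : ℤ) - x) := by
      have : ((p^2 : ℕ) : ℤ) = (p : ℤ) * p := by push_cast; ring
      rw [this] at h3; convert h3 using 1; ring
    exact (mul_dvd_mul_iff_left (by exact_mod_cast hp.pos.ne' : (p:ℤ) ≠ 0)).1 h5
  have : ((x : ℤ) : ZMod p) = (((y:ℕ) : ℤ) : ZMod p) :=
    (ZMod.intCast_eq_intCast_iff _ _ _).2 (Int.modEq_iff_dvd.2 h4)
  push_cast at this; exact this

lemma lerch {p : ℕ} (hp : p.Prime) {a : ℕ} (ha : ¬ p ∣ a) :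
    ((fq p a : ℤ) : ZMod p) =
      (a : ZMod p)⁻¹ * ∑ k ∈ Ioc 0 (p-1), ((k * a / p : ℕ) : ZMod p) * ((k : ℕ) : ZMod p)⁻¹ := by
  haveI : Fact p.Prime := ⟨hp⟩
  haveI : NeZero p := ⟨hp.pos.ne'⟩
  set R := ZMod (p^2) with hR
  set w : ℕ → ℕ := fun k => (((k*a : ℕ) : ZMod p)⁻¹).val with hw
  have hpp : (p : R) * (p : R) = 0 := by
    rw [← Nat.cast_mul, ← pow_two, ZMod.natCast_self]
  -- step A
  have key : ∀ k ∈ Ioc 0 (p-1), ((k*a : ℕ) : R) =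
      ((k*a % p : ℕ) : R) * (1 + (p:R) * (((k*a/p : ℕ) : R) * ((w k : ℕ) : R))) := by
    intro k hk
    have hk0 : 0 < k := (mem_Ioc.1 hk).1
    have hk1 : k ≤ p - 1 := (mem_Ioc.1 hk).2
    have hka : ¬ p ∣ k * a := by
      intro h
      rcases hp.dvd_mul.1 h with h' | h'
      · have := Nat.le_of_dvd hk0 h'; omega
      · exact ha h'
    have hkane : ((k*a : ℕ) : ZMod p) ≠ 0 := by
      rw [Ne, ZMod.natCast_eq_zero_iff]; exact hka
    have hwk : ((w k : ℕ) : ZMod p) = ((k*a : ℕ) : ZMod p)⁻¹ := by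
      rw [hw]; simp only []; rw [ZMod.natCast_val, ZMod.cast_id]
    have hone : (k*a % p) * w k % p = 1 := by
      apply nat_eq_of_cast (Nat.mod_lt _ hp.pos) hp.one_lt
      rw [ZMod.natCast_mod, Nat.cast_mul, ZMod.natCast_mod, hwk, mul_inv_cancel₀ hkane, Nat.cast_one]
    have hm : (k*a % p) * w k = p * (((k*a % p) * w k)/p) + 1 := by
      conv_lhs => rw [← Nat.div_add_mod ((k*a % p) * w k) p]
      rw [hone]
    have hrw : ((k*a % p : ℕ) : R) * ((w k : ℕ) : R) = (p:R) * ((((k*a % p) * w k)/p : ℕ) : R) + 1 := by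
      rw [← Nat.cast_mul]
      conv_lhs => rw [hm]
      push_cast; ring
    have hsplit : ((k*a : ℕ) : R) = (p : R) * ((k*a/p : ℕ) : R) + ((k*a % p : ℕ) : R) := by
      conv_lhs => rw [← Nat.div_add_mod (k*a) p]
      push_cast; exact congrArg (· + _) (Nat.cast_mul (p : ℕ) (k*a/p) : ((p * (k*a/p) : ℕ) : ZMod (p^2)) = _)
    rw [hsplit]
    have expand : ((k*a % p : ℕ) : R) * (1 + (p:R) * (((k*a/p : ℕ) : R) * ((w k : ℕ) : R)))
        = ((k*a % p : ℕ) : R) + (p:R) * (((k*a/p : ℕ) : R) * (((k*a % p : ℕ) : R) * ((w k : ℕ) : R))) := by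
      ring
    rw [expand, hrw]
    have : (p:R) * (((k*a/p : ℕ) : R) * ((p:R) * ((((k*a % p) * w k)/p : ℕ) : R) + 1))
        = (p:R) * ((k*a/p : ℕ) : R) + (p:R)*(p:R) * (((k*a/p : ℕ) : R) * ((((k*a % p) * w k)/p : ℕ) : R)) := by
      ring
    rw [this, hpp]; ring
  -- products
  have hprod : ∏ k ∈ Ioc 0 (p-1), ((k*a : ℕ) : R)
      = (∏ k ∈ Ioc 0 (p-1), ((k*a % p : ℕ) : R)) *
        (1 + (p:R) * ∑ k ∈ Ioc 0 (p-1), ((k*a/p : ℕ) : R) * ((w k : ℕ) : R)) := by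
    rw [Finset.prod_congr rfl key, Finset.prod_mul_distrib,
      prod_one_add (p:R) hpp]
  have hperm : ∏ k ∈ Ioc 0 (p-1), ((k*a % p : ℕ) : R) = ∏ k ∈ Ioc 0 (p-1), ((k : ℕ) : R) :=
    prod_mod_perm hp ha (fun m => ((m : ℕ) : R))
  have hlhs : ∏ k ∈ Ioc 0 (p-1), ((k*a : ℕ) : R)
      = (∏ k ∈ Ioc 0 (p-1), ((k : ℕ) : R)) * ((a:ℕ) : R)^(p-1) := by
    have : ∀ k, ((k*a : ℕ) : R) = ((k:ℕ) : R) * ((a:ℕ) : R) := by intro k; exact (Nat.cast_mul k a : ((k*a : ℕ) : ZMod (p^2)) = _)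
    rw [Finset.prod_congr rfl (fun k _ => this k), Finset.prod_mul_distrib,
      Finset.prod_const, Nat.card_Ioc]
    simp
  have hu : IsUnit (∏ k ∈ Ioc 0 (p-1), ((k : ℕ) : R)) := by
    apply Finset.prod_induction _ IsUnit (fun a b => IsUnit.mul) isUnit_one
    intro k hk
    have hk0 : 0 < k := (mem_Ioc.1 hk).1
    have hk1 : k ≤ p - 1 := (mem_Ioc.1 hk).2
    have hnd : ¬ p ∣ k := fun h => by have := Nat.le_of_dvd hk0 h; omega
    exact (ZMod.isUnit_iff_coprime k (p^2)).2
      (Nat.Coprime.pow_right _ ((hp.coprime_iff_not_dvd.2 hnd).symm))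
  have hcancel : ((a:ℕ) : R)^(p-1)
      = 1 + (p:R) * ∑ k ∈ Ioc 0 (p-1), ((k*a/p : ℕ) : R) * ((w k : ℕ) : R) := by
    apply hu.mul_left_cancel
    rw [← hlhs, hprod, hperm]
  have hfqR : ((a:ℕ) : R)^(p-1) = 1 + (p:R) * ((fq p a : ℤ) : R) := by
    have := fq_spec hp ha
    have h2 : (((p : ℤ) * fq p a : ℤ) : R) = (((a : ℤ)^(p-1) - 1 : ℤ) : R) := by rw [this]
    push_cast at h2
    rw [Int.cast_mul, Int.cast_natCast] at h2
    linear_combination -h2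
  -- N as natural
  set N : ℕ := ∑ k ∈ Ioc 0 (p-1), (k*a/p) * w k with hN
  have hsum : ∑ k ∈ Ioc 0 (p-1), ((k*a/p : ℕ) : R) * ((w k : ℕ) : R) = ((N : ℕ) : R) := by
    rw [hN]; exact (Finset.sum_congr rfl fun k _ => (Nat.cast_mul _ _).symm).trans (Nat.cast_sum _ _).symm
  have hpe : (p : R) * ((fq p a : ℤ) : R) = (p : R) * ((N : ℕ) : R) := by
    have e1 : 1 + (p:R) * ((fq p a : ℤ) : R) = 1 + (p:R)*((N : ℕ) : R) := by
      rw [← hfqR, hcancel, hsum]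
    exact add_left_cancel e1
  have hdesc : ((fq p a : ℤ) : ZMod p) = ((N : ℕ) : ZMod p) := descend hp _ _ hpe
  rw [hdesc, hN]
  push_cast
  rw [Finset.mul_sum]
  apply Finset.sum_congr rfl
  intro k hk
  have hk0 : 0 < k := (mem_Ioc.1 hk).1
  have hk1 : k ≤ p - 1 := (mem_Ioc.1 hk).2
  have hwk : ((w k : ℕ) : ZMod p) = ((k*a : ℕ) : ZMod p)⁻¹ := by
    rw [hw]; simp only []; rw [ZMod.natCast_val, ZMod.cast_id]
  rw [hwk]
  have : ((k*a : ℕ) : ZMod p) = ((k:ℕ) : ZMod p) * ((a:ℕ) : ZMod p) := by push_cast; ring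
  rw [this, mul_inv, mul_comm (((k:ℕ) : ZMod p))⁻¹]
  ring

def Hs (p m : ℕ) : ZMod p := ∑ k ∈ Ioc 0 m, ((k:ℕ) : ZMod p)⁻¹

lemma seg {p : ℕ} {a b : ℕ} (hab : a ≤ b) :
    ∑ k ∈ Ioc a b, ((k:ℕ) : ZMod p)⁻¹ = Hs p b - Hs p a := by
  rw [eq_sub_iff_add_eq, Hs, Hs, add_comm]
  exact Finset.sum_Ioc_consecutive _ (Nat.zero_le a) hab

lemma reflect {p : ℕ} (hp : p.Prime) {m : ℕ} (hm : m ≤ p - 1) :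
    ∑ k ∈ Ioc m (p-1), ((k : ℕ) : ZMod p)⁻¹ = - Hs p (p-1-m) := by
  haveI : Fact p.Prime := ⟨hp⟩
  have hp0 : 0 < p := hp.pos
  have : ∑ k ∈ Ioc m (p-1), ((k : ℕ) : ZMod p)⁻¹
      = ∑ j ∈ Ioc 0 (p-1-m), -(((j : ℕ) : ZMod p)⁻¹) := by
    refine Finset.sum_nbij' (fun k => p - k) (fun k => p - k) ?_ ?_ ?_ ?_ ?_
    · intro k hk; simp only [mem_Ioc] at *; omega
    · intro k hk; simp only [mem_Ioc] at *; omega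
    · intro k hk; simp only [mem_Ioc] at hk; show p - (p - k) = k; omega
    · intro k hk; simp only [mem_Ioc] at hk; show p - (p - k) = k; omega
    · intro k hk
      simp only [mem_Ioc] at hk
      have hkp : k ≤ p := by omega
      have hcast : ((p - k : ℕ) : ZMod p) = -((k:ℕ) : ZMod p) := by
        push_cast [Nat.cast_sub hkp]
        simp [ZMod.natCast_self]
      show ((k:ℕ) : ZMod p)⁻¹ = -(((p - k : ℕ) : ZMod p)⁻¹)
      rw [hcast, inv_neg, neg_neg]
  rw [this, Finset.sum_neg_distrib, Hs]

lemma two_ne {p : ℕ} (hp : p.Prime) (hp2 : p ≠ 2) : (2 : ZMod p) ≠ 0 := by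
  have h : ((2:ℕ) : ZMod p) ≠ 0 := by
    rw [Ne, ZMod.natCast_eq_zero_iff]
    intro h
    rcases (Nat.prime_dvd_prime_iff_eq hp Nat.prime_two).1 h with rfl
    exact hp2 rfl
  simpa using h

lemma Hfull {p : ℕ} (hp : p.Prime) (hp2 : p ≠ 2) : Hs p (p-1) = 0 := by
  haveI : Fact p.Prime := ⟨hp⟩
  have h := reflect hp (Nat.zero_le (p-1))
  rw [Nat.sub_zero] at h
  have h2 : (2 : ZMod p) * Hs p (p-1) = 0 := by
    rw [Hs] at h ⊢
    linear_combination h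
  rcases mul_eq_zero.1 h2 with h | h
  · exact absurd h (two_ne hp hp2)
  · exact h

lemma reflect' {p : ℕ} (hp : p.Prime) (hp2 : p ≠ 2) {m : ℕ} (hm : m ≤ p - 1) :
    Hs p (p-1-m) = Hs p m := by
  have h1 := seg (p := p) hm
  rw [reflect hp hm, Hfull hp hp2] at h1
  linear_combination -h1

lemma sum_odd_even {M : Type*} [AddCommMonoid M] (f : ℕ → M) (n : ℕ) :
    ∑ j ∈ Ioc 0 (2*n+1), f j
      = ∑ k ∈ range (n+1), f (2*k+1) + ∑ k ∈ Ioc 0 n, f (2*k) := by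
  induction n with
  | zero => simp
  | succ n ih =>
    have e1 : 2*(n+1)+1 = (2*n+1) + 1 + 1 := by ring
    calc ∑ j ∈ Ioc 0 (2*(n+1)+1), f j
        = (∑ j ∈ Ioc 0 (2*n+1), f j) + f (2*n+1+1) + f (2*n+1+1+1) := by
          rw [e1, Finset.sum_Ioc_succ_top (by omega) f, Finset.sum_Ioc_succ_top (by omega) f]
      _ = ∑ k ∈ range (n+1+1), f (2*k+1) + ∑ k ∈ Ioc 0 (n+1), f (2*k) := by
          rw [ih, Finset.sum_range_succ (fun k => f (2*k+1)) (n+1),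
            Finset.sum_Ioc_succ_top (Nat.zero_le n) (fun k => f (2*k))]
          rw [show 2*n+1+1 = 2*(n+1) by ring]
          abel

lemma app2 {p n : ℕ} (hp : p.Prime) (hpn : p = 6*n+1) (hn1 : 1 ≤ n) :
    ((fq p 2 : ℤ) : ZMod p) = ((2:ℕ) : ZMod p)⁻¹ * (- Hs p (3*n)) := by
  have h2nd : ¬ p ∣ 2 := fun h => by have := Nat.le_of_dvd (by norm_num) h; omega
  rw [lerch hp h2nd]
  congr 1
  rw [show p - 1 = 6*n by omega,
    ← Finset.sum_Ioc_consecutive _ (Nat.zero_le (3*n)) (show 3*n ≤ 6*n by omega)]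
  have h1 : ∑ k ∈ Ioc 0 (3*n), ((k*2/p : ℕ) : ZMod p) * ((k:ℕ) : ZMod p)⁻¹ = 0 := by
    apply Finset.sum_eq_zero
    intro k hk; simp only [mem_Ioc] at hk
    rw [show k*2/p = 0 from Nat.div_eq_of_lt (by omega), Nat.cast_zero, zero_mul]
  have h2 : ∑ k ∈ Ioc (3*n) (6*n), ((k*2/p : ℕ) : ZMod p) * ((k:ℕ) : ZMod p)⁻¹
      = ∑ k ∈ Ioc (3*n) (p-1), ((k:ℕ) : ZMod p)⁻¹ := by
    rw [show (6:ℕ)*n = p - 1 by omega]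
    apply Finset.sum_congr rfl
    intro k hk; simp only [mem_Ioc] at hk
    rw [show k*2/p = 1 from Nat.div_eq_of_lt_le (by omega) (by omega), Nat.cast_one, one_mul]
  rw [h1, h2, zero_add, reflect hp (by omega), show p-1-3*n = 3*n by omega]

lemma app3 {p n : ℕ} (hp : p.Prime) (hpn : p = 6*n+1) (hn1 : 1 ≤ n) :
    ((fq p 3 : ℤ) : ZMod p) = ((3:ℕ) : ZMod p)⁻¹ * (-(2 * Hs p (2*n))) := by
  have h3nd : ¬ p ∣ 3 := fun h => by have := Nat.le_of_dvd (by norm_num) h; omega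
  have hp2 : p ≠ 2 := by omega
  have h42 : Hs p (4*n) = Hs p (2*n) := by
    have h := reflect' hp hp2 (show 2*n ≤ p - 1 by omega)
    rwa [show p-1-2*n = 4*n by omega] at h
  rw [lerch hp h3nd]
  congr 1
  rw [show p - 1 = 6*n by omega,
    ← Finset.sum_Ioc_consecutive _ (Nat.zero_le (4*n)) (show 4*n ≤ 6*n by omega),
    ← Finset.sum_Ioc_consecutive _ (Nat.zero_le (2*n)) (show 2*n ≤ 4*n by omega)]
  have h1 : ∑ k ∈ Ioc 0 (2*n), ((k*3/p : ℕ) : ZMod p) * ((k:ℕ) : ZMod p)⁻¹ = 0 := by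
    apply Finset.sum_eq_zero
    intro k hk; simp only [mem_Ioc] at hk
    rw [show k*3/p = 0 from Nat.div_eq_of_lt (by omega), Nat.cast_zero, zero_mul]
  have h2 : ∑ k ∈ Ioc (2*n) (4*n), ((k*3/p : ℕ) : ZMod p) * ((k:ℕ) : ZMod p)⁻¹
      = Hs p (4*n) - Hs p (2*n) := by
    rw [← seg (show 2*n ≤ 4*n by omega)]
    apply Finset.sum_congr rfl
    intro k hk; simp only [mem_Ioc] at hk
    rw [show k*3/p = 1 from Nat.div_eq_of_lt_le (by omega) (by omega), Nat.cast_one, one_mul]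
  have h3 : ∑ k ∈ Ioc (4*n) (6*n), ((k*3/p : ℕ) : ZMod p) * ((k:ℕ) : ZMod p)⁻¹
      = 2 * (- Hs p (2*n)) := by
    have : ∑ k ∈ Ioc (4*n) (6*n), ((k*3/p : ℕ) : ZMod p) * ((k:ℕ) : ZMod p)⁻¹
        = ∑ k ∈ Ioc (4*n) (6*n), 2 * ((k:ℕ) : ZMod p)⁻¹ := by
      apply Finset.sum_congr rfl
      intro k hk; simp only [mem_Ioc] at hk
      rw [show k*3/p = 2 from Nat.div_eq_of_lt_le (by omega) (by omega)]
      norm_num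
    rw [this, ← Finset.mul_sum, show (6:ℕ)*n = p - 1 by omega, reflect hp (by omega),
      show p-1-4*n = 2*n by omega]
  rw [h1, h2, h3, h42]
  ring

lemma app6 {p n : ℕ} (hp : p.Prime) (hpn : p = 6*n+1) (hn1 : 1 ≤ n) :
    ((fq p 6 : ℤ) : ZMod p) = ((6:ℕ) : ZMod p)⁻¹ *
      (-(2 * Hs p n + 2 * Hs p (2*n) + Hs p (3*n))) := by
  have h6nd : ¬ p ∣ 6 := fun h => by have := Nat.le_of_dvd (by norm_num) h; omega
  have hp2 : p ≠ 2 := by omega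
  have h42 : Hs p (4*n) = Hs p (2*n) := by
    have h := reflect' hp hp2 (show 2*n ≤ p - 1 by omega)
    rwa [show p-1-2*n = 4*n by omega] at h
  have h51 : Hs p (5*n) = Hs p n := by
    have h := reflect' hp hp2 (show n ≤ p - 1 by omega)
    rwa [show p-1-n = 5*n by omega] at h
  have h60 : Hs p (6*n) = 0 := by
    have h := Hfull hp hp2
    rwa [show p-1 = 6*n by omega] at h
  rw [lerch hp h6nd]
  congr 1
  have block : ∀ j a b : ℕ, j ≤ 5 → a = j*n → b = (j+1)*n →
      ∑ k ∈ Ioc a b, ((k*6/p : ℕ) : ZMod p) * ((k:ℕ) : ZMod p)⁻¹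
        = (j : ZMod p) * (Hs p b - Hs p a) := by
    intro j a b hj ha hb
    rw [← seg (by subst ha hb; exact Nat.mul_le_mul_right n (by omega)), Finset.mul_sum]
    apply Finset.sum_congr rfl
    intro k hk; simp only [mem_Ioc] at hk
    rw [show k*6/p = j from Nat.div_eq_of_lt_le (by subst ha hb; nlinarith) (by subst ha hb; nlinarith)]
  rw [show p - 1 = 6*n by omega,
    ← Finset.sum_Ioc_consecutive _ (Nat.zero_le (5*n)) (show 5*n ≤ 6*n by omega),
    ← Finset.sum_Ioc_consecutive _ (Nat.zero_le (4*n)) (show 4*n ≤ 5*n by omega),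
    ← Finset.sum_Ioc_consecutive _ (Nat.zero_le (3*n)) (show 3*n ≤ 4*n by omega),
    ← Finset.sum_Ioc_consecutive _ (Nat.zero_le (2*n)) (show 2*n ≤ 3*n by omega),
    ← Finset.sum_Ioc_consecutive _ (Nat.zero_le (1*n)) (show 1*n ≤ 2*n by omega)]
  rw [block 0 0 (1*n) (by norm_num) (by ring) (by ring),
    block 1 (1*n) (2*n) (by norm_num) rfl (by ring),
    block 2 (2*n) (3*n) (by norm_num) rfl (by ring),
    block 3 (3*n) (4*n) (by norm_num) rfl (by ring),
    block 4 (4*n) (5*n) (by norm_num) rfl (by ring),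
    block 5 (5*n) (6*n) (by norm_num) rfl (by ring)]
  rw [show (1:ℕ)*n = n by ring] at *
  rw [h42, h51, h60]
  push_cast
  ring

lemma main_zmod {p n : ℕ} (hp : p.Prime) (hpn : p = 6*n+1) (hn1 : 1 ≤ n) :
    ∑ k ∈ range (n+1), ((2*k+1 : ℕ) : ZMod p)⁻¹
      = ((fq p 2 : ℤ) : ZMod p) - 3 * (4 : ZMod p)⁻¹ * ((fq p 3 : ℤ) : ZMod p)
        + 3 * (2 : ZMod p)⁻¹ := by
  haveI : Fact p.Prime := ⟨hp⟩
  have hp2 : p ≠ 2 := by omega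
  have hp3 : p ≠ 3 := by omega
  have h2ne : (2 : ZMod p) ≠ 0 := two_ne hp hp2
  have h3ne : (3 : ZMod p) ≠ 0 := by
    have h : ((3:ℕ) : ZMod p) ≠ 0 := by
      rw [Ne, ZMod.natCast_eq_zero_iff]
      intro h
      rcases (Nat.prime_dvd_prime_iff_eq hp Nat.prime_three).1 h with rfl
      exact hp3 rfl
    simpa using h
  have h6ne : (6 : ZMod p) ≠ 0 := by
    have e : (6 : ZMod p) = 2 * 3 := by norm_num
    rw [e]; exact mul_ne_zero h2ne h3ne
  have h4ne : (4 : ZMod p) ≠ 0 := by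
    have e : (4 : ZMod p) = 2 * 2 := by norm_num
    rw [e]; exact mul_ne_zero h2ne h2ne
  set Q2 := ((fq p 2 : ℤ) : ZMod p) with hQ2
  set Q3 := ((fq p 3 : ℤ) : ZMod p) with hQ3
  set a := Hs p n with ha
  set b := Hs p (2*n) with hb
  set c := Hs p (3*n) with hc
  -- cleared forms of the three applications
  have e2 := app2 hp hpn hn1
  have e3 := app3 hp hpn hn1
  have e6 := app6 hp hpn hn1
  have hn2 : ((2:ℕ) : ZMod p) = 2 := by norm_num
  have hn3 : ((3:ℕ) : ZMod p) = 3 := by norm_num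
  have hn6 : ((6:ℕ) : ZMod p) = 6 := by norm_num
  rw [hn2] at e2; rw [hn3] at e3; rw [hn6] at e6
  have e2' : (2 : ZMod p) * Q2 = - c := by
    rw [← hQ2] at e2  -- may be already
    rw [e2, ← mul_assoc, mul_inv_cancel₀ h2ne, one_mul]
  have e3' : (3 : ZMod p) * Q3 = -(2*b) := by
    rw [← hQ3] at e3
    rw [e3, ← mul_assoc, mul_inv_cancel₀ h3ne, one_mul]
  -- fq6 = p*fq2*fq3 + fq2 + fq3
  have h2nd : ¬ p ∣ 2 := fun h => by have := Nat.le_of_dvd (by norm_num) h; omega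
  have h3nd : ¬ p ∣ 3 := fun h => by have := Nat.le_of_dvd (by norm_num) h; omega
  have h6nd : ¬ p ∣ 6 := fun h => by have := Nat.le_of_dvd (by norm_num) h; omega
  have hfq2 := fq_spec hp h2nd
  have hfq3 := fq_spec hp h3nd
  have hfq6 := fq_spec hp h6nd
  have hfq6' : fq p 6 = (p:ℤ) * fq p 2 * fq p 3 + fq p 2 + fq p 3 := by
    apply mul_left_cancel₀ (show (p:ℤ) ≠ 0 by exact_mod_cast hp.pos.ne')
    calc (p:ℤ) * fq p 6 = ((6:ℕ):ℤ)^(p-1) - 1 := hfq6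
      _ = (((2:ℕ):ℤ)^(p-1) - 1) * (((3:ℕ):ℤ)^(p-1) - 1)
          + (((2:ℕ):ℤ)^(p-1) - 1) + (((3:ℕ):ℤ)^(p-1) - 1) := by
        push_cast
        rw [show ((6:ℤ))^(p-1) = 2^(p-1) * 3^(p-1) by rw [← mul_pow]; norm_num]
        ring
      _ = ((p:ℤ) * fq p 2) * ((p:ℤ) * fq p 3) + (p:ℤ) * fq p 2 + (p:ℤ) * fq p 3 := by
        rw [hfq2, hfq3]
      _ = (p:ℤ) * ((p:ℤ) * fq p 2 * fq p 3 + fq p 2 + fq p 3) := by ring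
  have hq6cast : ((fq p 6 : ℤ) : ZMod p) = Q2 + Q3 := by
    rw [hfq6']
    push_cast
    rw [ZMod.natCast_self]
    ring
  have e6' : (6 : ZMod p) * (Q2 + Q3) = -(2*a + 2*b + c) := by
    rw [← hq6cast, e6, ← mul_assoc, mul_inv_cancel₀ h6ne, one_mul]
  -- the odd sum
  set S := ∑ k ∈ range (n+1), ((2*k+1 : ℕ) : ZMod p)⁻¹ with hS
  set x := ((2*n+1 : ℕ) : ZMod p) with hx
  have P1 : Hs p (2*n+1) = S + ∑ k ∈ Ioc 0 n, ((2*k : ℕ) : ZMod p)⁻¹ := by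
    rw [Hs]
    exact sum_odd_even (fun j => ((j:ℕ) : ZMod p)⁻¹) n
  have P2 : Hs p (2*n+1) = b + x⁻¹ := by
    rw [Hs, Finset.sum_Ioc_succ_top (Nat.zero_le (2*n)), hb, Hs, hx]
  have P3 : (2 : ZMod p) * ∑ k ∈ Ioc 0 n, ((2*k : ℕ) : ZMod p)⁻¹ = a := by
    have : ∀ k : ℕ, ((2*k : ℕ) : ZMod p)⁻¹ = (2 : ZMod p)⁻¹ * ((k:ℕ) : ZMod p)⁻¹ := by
      intro k
      rw [show ((2*k : ℕ) : ZMod p) = (2 : ZMod p) * ((k:ℕ) : ZMod p) by push_cast; ring, mul_inv]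
    rw [Finset.sum_congr rfl (fun k _ => this k), ← Finset.mul_sum, ← mul_assoc,
      mul_inv_cancel₀ h2ne, one_mul, ha, Hs]
  have P4 : (2 : ZMod p) * x⁻¹ = 3 := by
    have hx3 : x * 3 = 2 := by
      rw [hx, show (3 : ZMod p) = ((3:ℕ) : ZMod p) by norm_num, ← Nat.cast_mul,
        show (2*n+1)*3 = p + 2 by omega]
      push_cast
      rw [ZMod.natCast_self]
      ring
    have hxne : x ≠ 0 := by
      intro h; rw [h, zero_mul] at hx3; exact h2ne hx3.symm
    field_simp
    linear_combination -hx3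
  have hS' : (2 : ZMod p) * S = 2*b + 3 - a := by
    linear_combination (-2 : ZMod p)*P1 + 2*P2 - P3 + P4
  have hgoal4 : (4 : ZMod p) * S = 4*Q2 - 3*Q3 + 6 := by
    linear_combination (2 : ZMod p)*hS' + e2' + 3*e3' - e6'
  have i1 : (4:ZMod p) * (4:ZMod p)⁻¹ = 1 := mul_inv_cancel₀ h4ne
  have i2 : (2:ZMod p) * (2:ZMod p)⁻¹ = 1 := mul_inv_cancel₀ h2ne
  apply mul_left_cancel₀ h4ne
  rw [hgoal4]
  linear_combination 3*Q3*i1 - 6*i2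

lemma den_add_nd {p : ℕ} (hp : p.Prime) {q r : ℚ} (hq : ¬ p ∣ q.den) (hr : ¬ p ∣ r.den) :
    ¬ p ∣ (q + r).den := by
  intro h
  rcases hp.dvd_mul.1 (h.trans (Rat.add_den_dvd q r)) with h' | h'
  · exact hq h'
  · exact hr h'

lemma den_mul_nd {p : ℕ} (hp : p.Prime) {q r : ℚ} (hq : ¬ p ∣ q.den) (hr : ¬ p ∣ r.den) :
    ¬ p ∣ (q * r).den := by
  intro h
  rcases hp.dvd_mul.1 (h.trans (Rat.mul_den_dvd q r)) with h' | h'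
  · exact hq h'
  · exact hr h'

lemma den_sub_nd {p : ℕ} (hp : p.Prime) {q r : ℚ} (hq : ¬ p ∣ q.den) (hr : ¬ p ∣ r.den) :
    ¬ p ∣ (q - r).den := by
  rw [sub_eq_add_neg]
  exact den_add_nd hp hq (by rwa [Rat.neg_den])

lemma den_sum_nd {p : ℕ} (hp : p.Prime) (s : Finset ℕ) (f : ℕ → ℚ)
    (h : ∀ i ∈ s, ¬ p ∣ (f i).den) : ¬ p ∣ (∑ i ∈ s, f i).den := by
  induction s using Finset.cons_induction with
  | empty => simpa using hp.one_lt.ne'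
  | cons a s ha ih =>
    rw [Finset.sum_cons]
    exact den_add_nd hp (h a (Finset.mem_cons_self a s))
      (ih fun i hi => h i (Finset.mem_cons_of_mem hi))

lemma den_int_nd {p : ℕ} (hp : p.Prime) (a : ℤ) : ¬ p ∣ ((a : ℚ)).den := by
  rw [Rat.den_intCast]
  simpa using hp.one_lt.ne'

lemma dne {p : ℕ} {q : ℚ} (h : ¬ p ∣ q.den) : ((q.den : ℕ) : ZMod p) ≠ 0 := by
  rw [Ne, ZMod.natCast_eq_zero_iff]
  exact h

lemma cast_sum_nd {p : ℕ} [hpf : Fact p.Prime] (hp : p.Prime) (s : Finset ℕ) (f : ℕ → ℚ)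
    (h : ∀ i ∈ s, ¬ p ∣ (f i).den) :
    ((∑ i ∈ s, f i : ℚ) : ZMod p) = ∑ i ∈ s, ((f i : ℚ) : ZMod p) := by
  induction s using Finset.cons_induction with
  | empty => simp
  | cons a s ha ih =>
    rw [Finset.sum_cons, Finset.sum_cons,
      Rat.cast_add_of_ne_zero (dne (h a (Finset.mem_cons_self a s)))
        (dne (den_sum_nd hp s f (fun i hi => h i (Finset.mem_cons_of_mem hi)))),
      ih (fun i hi => h i (Finset.mem_cons_of_mem hi))]

lemma num_dvd_of_cast_zero {p : ℕ} [hpf : Fact p.Prime] (hp : p.Prime) (q : ℚ) (hden : ¬ p ∣ q.den)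
    (h : ((q : ℚ) : ZMod p) = 0) : (p : ℤ) ∣ q.num := by
  rw [Rat.cast_def, div_eq_zero_iff] at h
  rcases h with h | h
  · exact (ZMod.intCast_zmod_eq_zero_iff_dvd _ _).1 h
  · exact absurd h (dne hden)

theorem stmt6' (p : ℕ) (hp : p.Prime) (hp5 : 5 ≤ p) (h1 : p % 6 = 1) :
    ∃ r : ℚ, ¬ ((p : ℤ) ∣ (r.den : ℤ)) ∧
      (∑ k ∈ Finset.range ((p - 1) / 6 + 1), (1 : ℚ) / (2 * k + 1))
        - (((2 ^ (p - 1) - 1 : ℚ) / p) - (3 / 4) * ((3 ^ (p - 1) - 1 : ℚ) / p) + 3 / 2)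
      = (p : ℚ) * r := by
  haveI : Fact p.Prime := ⟨hp⟩
  set n := (p - 1) / 6 with hn
  have hpn : p = 6 * n + 1 := by omega
  have hn1 : 1 ≤ n := by omega
  have h2nd : ¬ p ∣ 2 := fun h => by have := Nat.le_of_dvd (by norm_num) h; omega
  have h3nd : ¬ p ∣ 3 := fun h => by have := Nat.le_of_dvd (by norm_num) h; omega
  have h4nd : ¬ p ∣ 4 := fun h => by have := Nat.le_of_dvd (by norm_num) h; omega
  have hpQ : (p : ℚ) ≠ 0 := by positivity
  -- Fermat quotient rewriting in ℚ
  have hr2 : ((2 ^ (p - 1) - 1 : ℚ) / p) = ((fq p 2 : ℤ) : ℚ) := by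
    rw [div_eq_iff hpQ]
    have h := fq_spec hp h2nd
    have h' := congrArg (fun z : ℤ => (z : ℚ)) h
    push_cast at h'
    linear_combination -h'
  have hr3 : ((3 ^ (p - 1) - 1 : ℚ) / p) = ((fq p 3 : ℤ) : ℚ) := by
    rw [div_eq_iff hpQ]
    have h := fq_spec hp h3nd
    have h' := congrArg (fun z : ℤ => (z : ℚ)) h
    push_cast at h'
    linear_combination -h'
  rw [hr2, hr3]
  set L : ℚ := ∑ k ∈ Finset.range (n + 1), (1 : ℚ) / (2 * k + 1) with hL
  set A : ℚ := ((fq p 2 : ℤ) : ℚ) with hA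
  set B : ℚ := (3 / 4) * ((fq p 3 : ℤ) : ℚ) with hB
  set C : ℚ := (3 / 2 : ℚ) with hC
  set D : ℚ := L - (A - B + C) with hD
  -- denominators
  have htermden : ∀ k ∈ Finset.range (n+1), ¬ p ∣ ((1 : ℚ) / (2 * (k:ℚ) + 1)).den := by
    intro k hk
    simp only [Finset.mem_range] at hk
    rw [show (1:ℚ)/(2*(k:ℚ)+1) = (((2*k+1 : ℕ) : ℚ))⁻¹ by push_cast; rw [one_div]]
    intro hdvd
    have h2 : (((((2*k+1 : ℕ) : ℚ))⁻¹).den : ℤ) ∣ ((2*k+1 : ℕ) : ℤ) := by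
      rw [show (((2*k+1 : ℕ) : ℚ))⁻¹ = ((1:ℤ) : ℚ) / (((2*k+1:ℕ) : ℤ) : ℚ) by push_cast; rw [one_div],
        ← Rat.divInt_eq_div]
      exact Rat.den_dvd _ _
    have h3 : (p : ℤ) ∣ ((2*k+1 : ℕ) : ℤ) := dvd_trans (Int.natCast_dvd_natCast.2 hdvd) h2
    have h4 := Int.natCast_dvd_natCast.1 h3
    have := Nat.le_of_dvd (by omega) h4
    omega
  have hdenL : ¬ p ∣ L.den := den_sum_nd hp _ _ htermden
  have hden34 : ¬ p ∣ ((3/4 : ℚ)).den := by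
    intro h
    have h2 : (((3/4 : ℚ)).den : ℤ) ∣ (4 : ℤ) := by
      rw [show (3/4 : ℚ) = ((3:ℤ) : ℚ) / ((4:ℤ) : ℚ) by norm_num, ← Rat.divInt_eq_div]
      exact Rat.den_dvd _ _
    have h3 : (p : ℤ) ∣ (((4:ℕ) : ℤ)) := by
      exact_mod_cast dvd_trans (Int.natCast_dvd_natCast.2 h) h2
    exact h4nd (Int.natCast_dvd_natCast.1 h3)
  have hden32 : ¬ p ∣ ((3/2 : ℚ)).den := by
    intro h
    have h2 : (((3/2 : ℚ)).den : ℤ) ∣ (2 : ℤ) := by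
      rw [show (3/2 : ℚ) = ((3:ℤ) : ℚ) / ((2:ℤ) : ℚ) by norm_num, ← Rat.divInt_eq_div]
      exact Rat.den_dvd _ _
    have h3 : (p : ℤ) ∣ (((2:ℕ) : ℤ)) := by
      exact_mod_cast dvd_trans (Int.natCast_dvd_natCast.2 h) h2
    exact h2nd (Int.natCast_dvd_natCast.1 h3)
  have hdenA : ¬ p ∣ A.den := den_int_nd hp _
  have hdenB : ¬ p ∣ B.den := den_mul_nd hp hden34 (den_int_nd hp _)
  have hdenC : ¬ p ∣ C.den := hden32
  have hdenAB : ¬ p ∣ (A - B).den := den_sub_nd hp hdenA hdenB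
  have hdenR : ¬ p ∣ (A - B + C).den := den_add_nd hp hdenAB hdenC
  have hdenD : ¬ p ∣ D.den := den_sub_nd hp hdenL hdenR
  -- field nonvanishing
  have h2ne : (2 : ZMod p) ≠ 0 := two_ne hp (by omega)
  have h4ne : (4 : ZMod p) ≠ 0 := by
    have e : (4 : ZMod p) = 2 * 2 := by norm_num
    rw [e]; exact mul_ne_zero h2ne h2ne
  -- cast of D is zero
  have hcast : ((D : ℚ) : ZMod p) = 0 := by
    rw [hD, Rat.cast_sub_of_ne_zero (dne hdenL) (dne hdenR), sub_eq_zero]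
    have hLc : ((L : ℚ) : ZMod p) = ∑ k ∈ Finset.range (n+1), ((2*k+1 : ℕ) : ZMod p)⁻¹ := by
      rw [hL, cast_sum_nd hp _ _ htermden]
      apply Finset.sum_congr rfl
      intro k hk
      simp only [Finset.mem_range] at hk
      rw [show (1:ℚ)/(2*(k:ℚ)+1) = (((2*k+1 : ℕ) : ℚ))⁻¹ by push_cast; rw [one_div]]
      rw [Rat.cast_inv_of_ne_zero, Rat.cast_natCast]
      rw [Rat.num_natCast,
        show (((2*k+1 : ℕ) : ℤ) : ZMod p) = ((2*k+1 : ℕ) : ZMod p) by push_cast; ring,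
        Ne, ZMod.natCast_eq_zero_iff]
      intro hdvd
      have := Nat.le_of_dvd (by omega) hdvd
      omega
    have hRc : (((A - B + C : ℚ)) : ZMod p)
        = ((fq p 2 : ℤ) : ZMod p) - 3 * (4 : ZMod p)⁻¹ * ((fq p 3 : ℤ) : ZMod p)
          + 3 * (2 : ZMod p)⁻¹ := by
      rw [Rat.cast_add_of_ne_zero (dne hdenAB) (dne hdenC),
        Rat.cast_sub_of_ne_zero (dne hdenA) (dne hdenB), hA, hB, hC,
        Rat.cast_mul_of_ne_zero (dne hden34) (dne (den_int_nd hp (fq p 3))),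
        Rat.cast_intCast, Rat.cast_intCast,
        show (3/4 : ℚ) = Rat.divInt 3 4 by rw [Rat.divInt_eq_div]; norm_num,
        show (3/2 : ℚ) = Rat.divInt 3 2 by rw [Rat.divInt_eq_div]; norm_num,
        Rat.cast_divInt_of_ne_zero _ (by push_cast; exact h4ne),
        Rat.cast_divInt_of_ne_zero _ (by push_cast; exact h2ne)]
      push_cast
      ring
    rw [hLc, hRc, main_zmod hp hpn hn1]
  have hnum : (p : ℤ) ∣ D.num := num_dvd_of_cast_zero hp D hdenD hcast
  -- construct r
  refine ⟨((D.num / p : ℤ) : ℚ) / ((D.den : ℕ) : ℚ), ?_, ?_⟩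
  · intro h
    have h2 : ((((D.num / p : ℤ) : ℚ) / ((D.den : ℕ) : ℚ)).den : ℤ) ∣ ((D.den : ℕ) : ℤ) := by
      rw [show ((D.den:ℕ) : ℚ) = (((D.den:ℕ) : ℤ) : ℚ) by push_cast; ring, ← Rat.divInt_eq_div]
      exact Rat.den_dvd _ _
    have h3 : (p : ℤ) ∣ ((D.den : ℕ) : ℤ) := dvd_trans h h2
    exact hdenD (Int.natCast_dvd_natCast.1 h3)
  · rw [show (p:ℚ) * (((D.num / p : ℤ) : ℚ) / ((D.den : ℕ) : ℚ))
        = (((p * (D.num / p) : ℤ) : ℚ)) / ((D.den : ℕ) : ℚ) by push_cast; ring,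
      Int.mul_ediv_cancel' hnum, Rat.num_div_den]

theorem stmt6 (p : ℕ) (hp : p.Prime) (hp5 : 5 ≤ p) (h1 : p % 6 = 1) :
    ratCongr p (∑ k ∈ Finset.range ((p - 1) / 6 + 1), (1 : ℚ) / (2 * k + 1))
      (((2 ^ (p - 1) - 1 : ℚ) / p) - (3 / 4) * ((3 ^ (p - 1) - 1 : ℚ) / p) + 3 / 2) := by
  exact stmt6' p hp hp5 h1
end

section
/- For any prime p with p ≡ 1 (mod 6), the sum ∑_{k=0}^{(p-1)/6} 1/(3k+1) ≡ -(2/3) q_2 + 2 (mod p), where q_2 = (2^{p-1}-1)/p. -/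
open Finset

section Core

variable {p : ℕ} [hpf : Fact p.Prime] {h : ℕ}

private lemma castsub (m : ℕ) (hm : m ≤ p) : ((p - m : ℕ) : ZMod p) = -(m : ZMod p) := by
  rw [Nat.cast_sub hm, ZMod.natCast_self, zero_sub]

private lemma castne {j : ℕ} (h0 : 0 < j) (hj : j < p) : ((j : ZMod p)) ≠ 0 := by
  rw [Ne, ZMod.natCast_eq_zero_iff]
  exact fun hd => absurd (Nat.le_of_dvd h0 hd) (not_le.2 hj)

/-- partial harmonic sum in `ZMod p` -/
private def Hz (p : ℕ) (n : ℕ) : ZMod p := ∑ i ∈ range n, ((i + 1 : ℕ) : ZMod p)⁻¹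

private lemma evenodd {M : Type*} [AddCommMonoid M] (f : ℕ → M) :
    ∀ n, ∑ i ∈ range (2 * n), f i
      = ∑ i ∈ range n, f (2 * i) + ∑ i ∈ range n, f (2 * i + 1)
  | 0 => by simp
  | (n + 1) => by
    have h2 : 2 * (n + 1) = (2 * n) + 1 + 1 := by ring
    rw [h2, sum_range_succ, sum_range_succ, evenodd f n, sum_range_succ, sum_range_succ]
    abel

private lemma even_part (n : ℕ) :
    ∑ i ∈ range n, ((2 * i + 1 + 1 : ℕ) : ZMod p)⁻¹ = (2 : ZMod p)⁻¹ * Hz p n := by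
  rw [Hz, mul_sum]
  refine sum_congr rfl fun i hi => ?_
  have : (2 * i + 1 + 1 : ℕ) = 2 * (i + 1) := by ring
  rw [this, Nat.cast_mul, mul_inv, Nat.cast_ofNat]

private lemma two_ne_s8 (hh : 0 < h) (hp6 : p = 6 * h + 1) : (2 : ZMod p) ≠ 0 := by
  have := castne (p := p) (j := 2) (by norm_num) (by omega)
  simpa using this

private lemma three_ne (hh : 0 < h) (hp6 : p = 6 * h + 1) : (3 : ZMod p) ≠ 0 := by
  have := castne (p := p) (j := 3) (by norm_num) (by omega)
  simpa using this

private lemma hz_six (hh : 0 < h) (hp6 : p = 6 * h + 1) : Hz p (6 * h) = 0 := by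
  have h2 := two_ne_s8 hh hp6
  have hrefl := sum_range_reflect (fun i => ((i + 1 : ℕ) : ZMod p)⁻¹) (6 * h)
  have heq : ∑ i ∈ range (6 * h), ((6 * h - 1 - i + 1 : ℕ) : ZMod p)⁻¹
      = -Hz p (6 * h) := by
    rw [Hz, ← sum_neg_distrib]
    refine sum_congr rfl fun i hi => ?_
    have hi' : i < 6 * h := mem_range.mp hi
    have : (6 * h - 1 - i + 1 : ℕ) = p - (i + 1) := by omega
    rw [this, castsub _ (by omega), inv_neg]
  rw [heq] at hrefl
  have h0 : (2 : ZMod p) * Hz p (6 * h) = 0 := by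
    rw [Hz] at hrefl ⊢
    linear_combination -hrefl
  rcases mul_eq_zero.mp h0 with h' | h'
  · exact absurd h' h2
  · exact h'

private lemma hz_split (hh : 0 < h) (hp6 : p = 6 * h + 1) :
    Hz p (2 * h) = Hz p h - Hz p (3 * h) := by
  have h2 := two_ne_s8 hh hp6
  have hc : (2 : ZMod p) * (2 : ZMod p)⁻¹ = 1 := mul_inv_cancel₀ h2
  have hsplit : Hz p (2 * h) = ∑ i ∈ range h, ((2 * i + 1 : ℕ) : ZMod p)⁻¹
      + ∑ i ∈ range h, ((2 * i + 1 + 1 : ℕ) : ZMod p)⁻¹ := by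
    rw [Hz, evenodd (fun i => ((i + 1 : ℕ) : ZMod p)⁻¹) h]
  have htail : Hz p (3 * h) = Hz p (2 * h)
      + ∑ i ∈ range h, ((2 * h + i + 1 : ℕ) : ZMod p)⁻¹ := by
    have h3 : 3 * h = 2 * h + h := by ring
    rw [h3, Hz, Hz, Finset.sum_range_add]
  have hodd : ∑ i ∈ range h, ((2 * i + 1 : ℕ) : ZMod p)⁻¹
      = -((2 : ZMod p)⁻¹ * (Hz p (3 * h) - Hz p (2 * h))) := by
    have hrefl := sum_range_reflect (fun i => ((2 * i + 1 : ℕ) : ZMod p)⁻¹) h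
    have heq : ∑ i ∈ range h, ((2 * (h - 1 - i) + 1 : ℕ) : ZMod p)⁻¹
        = -((2 : ZMod p)⁻¹ * (Hz p (3 * h) - Hz p (2 * h))) := by
      rw [htail, add_sub_cancel_left, mul_sum, ← sum_neg_distrib]
      refine sum_congr rfl fun i hi => ?_
      have hi' : i < h := mem_range.mp hi
      have he : (2 * (h - 1 - i) + 1 : ℕ) = p - 2 * (2 * h + i + 1) := by omega
      rw [he, castsub _ (by omega), inv_neg, Nat.cast_mul, mul_inv, Nat.cast_ofNat]
    rw [← heq, hrefl]
  rw [hodd, even_part] at hsplit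
  linear_combination 2 * hsplit - (Hz p (3 * h) - Hz p (2 * h) - Hz p h) * hc

/-- the A-chain: partial sum of 1/(3k+1) equals (1/3) Hz(3h) -/
private lemma a_chain (hh : 0 < h) (hp6 : p = 6 * h + 1) :
    ∑ k ∈ range h, ((3 * k + 1 : ℕ) : ZMod p)⁻¹ = (3 : ZMod p)⁻¹ * Hz p (3 * h) := by
  have h3 := three_ne hh hp6
  have hc : (3 : ZMod p) * (3 : ZMod p)⁻¹ = 1 := mul_inv_cancel₀ h3
  have hA' : ∑ k ∈ range (2 * h), ((3 * k + 1 : ℕ) : ZMod p)⁻¹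
      = -((3 : ZMod p)⁻¹ * Hz p (2 * h)) := by
    have hrefl := sum_range_reflect (fun k => ((3 * k + 1 : ℕ) : ZMod p)⁻¹) (2 * h)
    have heq : ∑ k ∈ range (2 * h), ((3 * (2 * h - 1 - k) + 1 : ℕ) : ZMod p)⁻¹
        = -((3 : ZMod p)⁻¹ * Hz p (2 * h)) := by
      rw [Hz, mul_sum, ← sum_neg_distrib]
      refine sum_congr rfl fun k hk => ?_
      have hk' : k < 2 * h := mem_range.mp hk
      have he : (3 * (2 * h - 1 - k) + 1 : ℕ) = p - 3 * (k + 1) := by omega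
      rw [he, castsub _ (by omega), inv_neg, Nat.cast_mul, mul_inv, Nat.cast_ofNat]
    rw [← heq, hrefl]
  have hsplit : ∑ k ∈ range (2 * h), ((3 * k + 1 : ℕ) : ZMod p)⁻¹
      = ∑ k ∈ range h, ((3 * k + 1 : ℕ) : ZMod p)⁻¹
        + ∑ k ∈ range h, ((3 * (h + k) + 1 : ℕ) : ZMod p)⁻¹ := by
    have h2 : 2 * h = h + h := by ring
    rw [h2, Finset.sum_range_add]
  have hhigh : ∑ k ∈ range h, ((3 * (h + k) + 1 : ℕ) : ZMod p)⁻¹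
      = -((3 : ZMod p)⁻¹ * Hz p h) := by
    have hrefl := sum_range_reflect (fun k => ((3 * (h + k) + 1 : ℕ) : ZMod p)⁻¹) h
    have heq : ∑ k ∈ range h, ((3 * (h + (h - 1 - k)) + 1 : ℕ) : ZMod p)⁻¹
        = -((3 : ZMod p)⁻¹ * Hz p h) := by
      rw [Hz, mul_sum, ← sum_neg_distrib]
      refine sum_congr rfl fun k hk => ?_
      have hk' : k < h := mem_range.mp hk
      have he : (3 * (h + (h - 1 - k)) + 1 : ℕ) = p - 3 * (k + 1) := by omega
      rw [he, castsub _ (by omega), inv_neg, Nat.cast_mul, mul_inv, Nat.cast_ofNat]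
    rw [← heq, hrefl]
  rw [hA', hhigh] at hsplit
  have hs := hz_split hh hp6
  linear_combination -hsplit - (3 : ZMod p)⁻¹ * hs

private lemma choose_pred : ∀ k, k < p → ((Nat.choose (p - 1) k : ℕ) : ZMod p) = (-1 : ZMod p) ^ k
  | 0, _ => by simp
  | (k + 1), hk => by
    have hp1 : p - 1 + 1 = p := Nat.succ_pred_eq_of_pos hpf.out.pos
    have hpascal := Nat.choose_succ_succ' (p - 1) k
    rw [hp1] at hpascal
    have hd : ((Nat.choose p (k + 1) : ℕ) : ZMod p) = 0 := by
      rw [ZMod.natCast_eq_zero_iff]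
      exact hpf.out.dvd_choose_self (Nat.succ_ne_zero k) hk
    have ih := choose_pred k (lt_trans (Nat.lt_succ_self k) hk)
    have hsum : ((Nat.choose (p - 1) k + Nat.choose (p - 1) (k + 1) : ℕ) : ZMod p) = 0 := by
      rw [← hpascal]; exact hd
    rw [Nat.cast_add, ih] at hsum
    rw [pow_succ]
    linear_combination hsum

private lemma quot_cast (k : ℕ) (hk1 : 1 ≤ k) (hkp : k < p) :
    ((Nat.choose p k / p : ℕ) : ZMod p) = (-1 : ZMod p) ^ (k - 1) * ((k : ℕ) : ZMod p)⁻¹ := by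
  have hd : p ∣ Nat.choose p k := hpf.out.dvd_choose_self (by omega) hkp
  have hcp : (Nat.choose p k / p) * p = Nat.choose p k := Nat.div_mul_cancel hd
  have hp1 : p - 1 + 1 = p := Nat.succ_pred_eq_of_pos hpf.out.pos
  have hk1' : k - 1 + 1 = k := by omega
  have hmul := Nat.add_one_mul_choose_eq (p - 1) (k - 1)
  rw [hp1, hk1'] at hmul
  have hkc : k * (Nat.choose p k / p) = Nat.choose (p - 1) (k - 1) := by
    apply Nat.eq_of_mul_eq_mul_right hpf.out.pos
    calc k * (Nat.choose p k / p) * p = (Nat.choose p k / p * p) * k := by ring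
      _ = Nat.choose p k * k := by rw [hcp]
      _ = Nat.choose (p - 1) (k - 1) * p := by rw [← hmul]; ring
  have hcast : ((k : ℕ) : ZMod p) * ((Nat.choose p k / p : ℕ) : ZMod p)
      = (-1 : ZMod p) ^ (k - 1) := by
    rw [← Nat.cast_mul, hkc, choose_pred (k - 1) (by omega)]
  have hkne : ((k : ℕ) : ZMod p) ≠ 0 := castne (by omega) hkp
  rw [← hcast, mul_comm ((k : ℕ) : ZMod p), mul_assoc, mul_inv_cancel₀ hkne, mul_one]

private lemma fermat_dvd (hh : 0 < h) (hp6 : p = 6 * h + 1) : p ∣ 2 ^ (p - 1) - 1 := by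
  rw [← ZMod.natCast_eq_zero_iff]
  have h1 : (1 : ℕ) ≤ 2 ^ (p - 1) := Nat.one_le_two_pow
  rw [Nat.cast_sub h1, Nat.cast_pow, Nat.cast_ofNat, Nat.cast_one,
    ZMod.pow_card_sub_one_eq_one (two_ne_s8 hh hp6), sub_self]

private lemma sum_c_eq (hh : 0 < h) (hp6 : p = 6 * h + 1) :
    ∑ k ∈ range (p - 1), (Nat.choose p (k + 1) / p) = 2 * ((2 ^ (p - 1) - 1) / p) := by
  have hN : ((2 ^ (p - 1) - 1) / p) * p = 2 ^ (p - 1) - 1 :=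
    Nat.div_mul_cancel (fermat_dvd hh hp6)
  have hbinom : ∑ k ∈ range (p - 1), Nat.choose p (k + 1) = 2 ^ p - 2 := by
    have h0 := Nat.sum_range_choose p
    rw [Finset.sum_range_succ' (fun i => Nat.choose p i) p] at h0
    have hp1 : p = (p - 1) + 1 := by omega
    rw [hp1, Finset.sum_range_succ, ← hp1] at h0
    simp only [Nat.choose_zero_right, Nat.choose_self] at h0
    have hple : 2 ≤ 2 ^ p := by
      calc 2 = 2 ^ 1 := (pow_one 2).symm
        _ ≤ 2 ^ p := Nat.pow_le_pow_right (by norm_num) hpf.out.one_lt.le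
    omega
  apply Nat.eq_of_mul_eq_mul_right hpf.out.pos
  rw [Finset.sum_mul]
  have hterm : ∀ k ∈ range (p - 1), (Nat.choose p (k + 1) / p) * p = Nat.choose p (k + 1) :=
    fun k hk => Nat.div_mul_cancel
      (hpf.out.dvd_choose_self (Nat.succ_ne_zero k) (by have := mem_range.mp hk; omega))
  rw [Finset.sum_congr rfl hterm, hbinom]
  have h2p : 2 ^ p = 2 * 2 ^ (p - 1) := by
    conv_lhs => rw [show p = (p - 1) + 1 by omega]
    rw [pow_succ]; ring
  calc 2 ^ p - 2 = 2 * (2 ^ (p - 1) - 1) := by omega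
    _ = 2 * (((2 ^ (p - 1) - 1) / p) * p) := by rw [hN]
    _ = 2 * ((2 ^ (p - 1) - 1) / p) * p := by ring

private lemma hz_three (hh : 0 < h) (hp6 : p = 6 * h + 1) :
    Hz p (3 * h) = -2 * (((2 ^ (p - 1) - 1) / p : ℕ) : ZMod p) := by
  have h2 := two_ne_s8 (p := p) hh hp6
  have hc : (2 : ZMod p) * (2 : ZMod p)⁻¹ = 1 := mul_inv_cancel₀ h2
  have hE : 2 * (((2 ^ (p - 1) - 1) / p : ℕ) : ZMod p)
      = ∑ k ∈ range (p - 1), (-1 : ZMod p) ^ k * ((k + 1 : ℕ) : ZMod p)⁻¹ := by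
    rw [show (2 : ZMod p) * (((2 ^ (p - 1) - 1) / p : ℕ) : ZMod p)
        = ((2 * ((2 ^ (p - 1) - 1) / p) : ℕ) : ZMod p) by push_cast; ring]
    rw [← sum_c_eq hh hp6, Nat.cast_sum]
    refine sum_congr rfl fun k hk => ?_
    have hk' : k < p - 1 := mem_range.mp hk
    have := quot_cast (p := p) (k + 1) (by omega) (by omega)
    simpa using this
  have hsplit : ∑ k ∈ range (p - 1), (-1 : ZMod p) ^ k * ((k + 1 : ℕ) : ZMod p)⁻¹
      = ∑ i ∈ range (3 * h), ((2 * i + 1 : ℕ) : ZMod p)⁻¹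
        - (2 : ZMod p)⁻¹ * Hz p (3 * h) := by
    have hp1 : p - 1 = 2 * (3 * h) := by omega
    rw [hp1, evenodd (fun k => (-1 : ZMod p) ^ k * ((k + 1 : ℕ) : ZMod p)⁻¹) (3 * h)]
    rw [← even_part (p := p) (3 * h)]
    have he : ∀ i, (-1 : ZMod p) ^ (2 * i) = 1 := fun i => (even_two_mul i).neg_one_pow
    have ho : ∀ i, (-1 : ZMod p) ^ (2 * i + 1) = -1 := fun i => Odd.neg_one_pow ⟨i, by ring⟩
    have e1 : ∑ i ∈ range (3 * h), (-1 : ZMod p) ^ (2 * i) * ((2 * i + 1 : ℕ) : ZMod p)⁻¹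
        = ∑ i ∈ range (3 * h), ((2 * i + 1 : ℕ) : ZMod p)⁻¹ :=
      sum_congr rfl fun i _ => by rw [he i, one_mul]
    have e2 : ∑ i ∈ range (3 * h), (-1 : ZMod p) ^ (2 * i + 1) * ((2 * i + 1 + 1 : ℕ) : ZMod p)⁻¹
        = -∑ i ∈ range (3 * h), ((2 * i + 1 + 1 : ℕ) : ZMod p)⁻¹ := by
      rw [← sum_neg_distrib]
      exact sum_congr rfl fun i _ => by rw [ho i, neg_one_mul]
    rw [e1, e2]
    ring
  have hzero : ∑ i ∈ range (3 * h), ((2 * i + 1 : ℕ) : ZMod p)⁻¹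
      + (2 : ZMod p)⁻¹ * Hz p (3 * h) = 0 := by
    have h6 : 6 * h = 2 * (3 * h) := by ring
    have := hz_six hh hp6
    rw [h6, Hz, evenodd (fun i => ((i + 1 : ℕ) : ZMod p)⁻¹) (3 * h)] at this
    rw [← even_part (p := p) (3 * h)]
    exact this
  rw [hsplit] at hE
  linear_combination hE - Hz p (3 * h) * hc + hzero

private lemma core_id (hh : 0 < h) (hp6 : p = 6 * h + 1) :
    ∑ k ∈ range (h + 1), ((3 * k + 1 : ℕ) : ZMod p)⁻¹
      = -(2 * (3 : ZMod p)⁻¹) * (((2 ^ (p - 1) - 1) / p : ℕ) : ZMod p) + 2 := by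
  rw [sum_range_succ, a_chain hh hp6, hz_three hh hp6]
  have hlast : ((3 * h + 1 : ℕ) : ZMod p)⁻¹ = 2 := by
    have hm : ((3 * h + 1 : ℕ) : ZMod p) * 2 = 1 := by
      have he : ((3 * h + 1) * 2 : ℕ) = p + 1 := by omega
      calc ((3 * h + 1 : ℕ) : ZMod p) * 2 = (((3 * h + 1) * 2 : ℕ) : ZMod p) := by
            push_cast; ring
        _ = ((p + 1 : ℕ) : ZMod p) := by rw [he]
        _ = 1 := by rw [Nat.cast_add, ZMod.natCast_self, Nat.cast_one, zero_add]
    exact inv_eq_of_mul_eq_one_right hm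
  rw [hlast]
  ring

end Core

section Bridge

variable {p : ℕ} [hpf : Fact p.Prime]

private lemma den_ne_of_dvd {d m : ℕ} (hdvd : d ∣ m) (hm : ((m : ℕ) : ZMod p) ≠ 0) :
    ((d : ℕ) : ZMod p) ≠ 0 := by
  intro h0
  apply hm
  rw [ZMod.natCast_eq_zero_iff] at h0 ⊢
  exact h0.trans hdvd

private lemma sum_den_cast {ι : Type*} (s : Finset ι) (f : ι → ℚ)
    (hf : ∀ i ∈ s, (((f i).den : ℕ) : ZMod p) ≠ 0) :
    (((∑ i ∈ s, f i).den : ℕ) : ZMod p) ≠ 0 ∧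
      (((∑ i ∈ s, f i : ℚ)) : ZMod p) = ∑ i ∈ s, ((f i : ℚ) : ZMod p) := by
  classical
  induction s using Finset.induction_on with
  | empty => simp
  | @insert a s ha ih =>
    have hfa := hf a (mem_insert_self a s)
    obtain ⟨ihden, ihcast⟩ := ih fun i hi => hf i (mem_insert_of_mem hi)
    constructor
    · rw [sum_insert ha]
      refine den_ne_of_dvd (Rat.add_den_dvd _ _) ?_
      rw [Nat.cast_mul]
      exact mul_ne_zero hfa ihden
    · rw [sum_insert ha, Rat.cast_add_of_ne_zero hfa ihden, ihcast, sum_insert ha]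

private lemma ratCongr_of_cast_zero {q : ℚ} (hden : ((q.den : ℕ) : ZMod p) ≠ 0)
    (hcast : ((q : ℚ) : ZMod p) = 0) :
    ∃ r : ℚ, ¬ ((p : ℤ) ∣ (r.den : ℤ)) ∧ q = (p : ℚ) * r := by
  have hnum : ((q.num : ℤ) : ZMod p) = 0 := by
    rw [Rat.cast_def] at hcast
    rcases div_eq_zero_iff.mp hcast with h0 | h0
    · exact h0
    · exact absurd h0 hden
  rw [ZMod.intCast_zmod_eq_zero_iff_dvd] at hnum
  obtain ⟨a, ha⟩ := hnum
  refine ⟨(a : ℚ) / ((q.den : ℤ) : ℚ), ?_, ?_⟩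
  · intro hdvd
    have hd : (((a : ℚ) / ((q.den : ℤ) : ℚ)).den : ℤ) ∣ (q.den : ℤ) := by
      rw [← Rat.divInt_eq_div]
      exact Rat.den_dvd a (q.den : ℤ)
    have hpd : (p : ℤ) ∣ (q.den : ℤ) := hdvd.trans hd
    rw [Int.natCast_dvd_natCast] at hpd
    exact hden (by rw [ZMod.natCast_eq_zero_iff]; exact hpd)
  · conv_lhs => rw [← Rat.num_div_den q]
    rw [ha]
    push_cast
    ring

end Bridge

theorem stmt8 (p : ℕ) (hp : p.Prime) (h1 : p % 6 = 1) :
    ratCongr p (∑ k ∈ Finset.range ((p - 1) / 6 + 1), (1 : ℚ) / (3 * k + 1))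
      (-(2 / 3) * ((2 ^ (p - 1) - 1 : ℚ) / p) + 2) := by
  haveI : Fact p.Prime := ⟨hp⟩
  have hge : 7 ≤ p := by have := hp.two_le; omega
  set h : ℕ := (p - 1) / 6 with hh_def
  have hp6 : p = 6 * h + 1 := by omega
  have hh : 0 < h := by omega
  set N : ℕ := (2 ^ (p - 1) - 1) / p with hN_def
  have hNp : N * p = 2 ^ (p - 1) - 1 := Nat.div_mul_cancel (fermat_dvd hh hp6)
  have hp0 : (p : ℚ) ≠ 0 := Nat.cast_ne_zero.mpr hp.pos.ne'
  -- rewrite the right-hand side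
  have hy : (-(2 / 3) * ((2 ^ (p - 1) - 1 : ℚ) / p) + 2 : ℚ)
      = ((6 - 2 * (N : ℤ) : ℤ) : ℚ) / 3 := by
    have h2 : ((2 : ℚ) ^ (p - 1) - 1) = (N : ℚ) * p := by
      have hcast : ((2 ^ (p - 1) - 1 : ℕ) : ℚ) = (2 : ℚ) ^ (p - 1) - 1 := by
        rw [Nat.cast_sub Nat.one_le_two_pow, Nat.cast_pow, Nat.cast_ofNat, Nat.cast_one]
      rw [← hcast, ← hNp]
      push_cast
      ring
    rw [h2, mul_div_assoc, div_self hp0, mul_one]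
    push_cast
    ring
  -- rewrite terms of the sum
  have hterm : ∀ k ∈ range (h + 1), (1 : ℚ) / (3 * (k : ℚ) + 1) = ((3 * k + 1 : ℕ) : ℚ)⁻¹ := by
    intro k _
    rw [one_div]
    norm_cast
  -- denominators and casts of terms
  have htermden : ∀ k ∈ range (h + 1), (((((3 * k + 1 : ℕ) : ℚ)⁻¹).den : ℕ) : ZMod p) ≠ 0 := by
    intro k hk
    have hk' : k < h + 1 := mem_range.mp hk
    have hdvd : ((((3 * k + 1 : ℕ) : ℚ)⁻¹).den : ℤ) ∣ ((3 * k + 1 : ℕ) : ℤ) := by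
      have : ((3 * k + 1 : ℕ) : ℚ)⁻¹ = ((1 : ℤ) : ℚ) / (((3 * k + 1 : ℕ) : ℤ) : ℚ) := by
        push_cast; rw [one_div]
      rw [this, ← Rat.divInt_eq_div]
      exact Rat.den_dvd 1 ((3 * k + 1 : ℕ) : ℤ)
    rw [Int.natCast_dvd_natCast] at hdvd
    exact den_ne_of_dvd hdvd (castne (by omega) (by omega))
  have htermcast : ∀ k ∈ range (h + 1),
      ((((3 * k + 1 : ℕ) : ℚ)⁻¹ : ℚ) : ZMod p) = ((3 * k + 1 : ℕ) : ZMod p)⁻¹ := by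
    intro k hk
    have hk' : k < h + 1 := mem_range.mp hk
    have hnum : ((((3 * k + 1 : ℕ) : ℚ).num : ℤ) : ZMod p) ≠ 0 := by
      rw [Rat.num_natCast]
      push_cast
      exact_mod_cast castne (p := p) (j := 3 * k + 1) (by omega) (by omega)
    rw [Rat.cast_inv_of_ne_zero hnum, Rat.cast_natCast]
  -- the sum rewritten
  rw [Finset.sum_congr rfl hterm, hy]
  -- x and y'
  set x : ℚ := ∑ k ∈ range (h + 1), ((3 * k + 1 : ℕ) : ℚ)⁻¹ with hx_def
  set y : ℚ := ((6 - 2 * (N : ℤ) : ℤ) : ℚ) / 3 with hy_def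
  obtain ⟨hxden, hxcast⟩ := sum_den_cast (range (h + 1)) _ htermden
  have hyden : ((y.den : ℕ) : ZMod p) ≠ 0 := by
    have hdvd : ((y.den : ℕ) : ℤ) ∣ (3 : ℤ) := by
      rw [hy_def, show ((3 : ℚ)) = (((3 : ℤ) : ℚ)) by norm_num, ← Rat.divInt_eq_div]
      exact Rat.den_dvd _ 3
    have hdvd' : y.den ∣ 3 := by exact_mod_cast hdvd
    exact den_ne_of_dvd hdvd' (castne (by omega) (by omega))
  have hycast : ((y : ℚ) : ZMod p) = ((6 - 2 * (N : ℤ) : ℤ) : ZMod p) * (3 : ZMod p)⁻¹ := by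
    rw [hy_def]
    rw [Rat.cast_div_of_ne_zero
      (by rw [Rat.den_intCast]; simp :
        (((((6 - 2 * (N : ℤ) : ℤ) : ℚ)).den : ℕ) : ZMod p) ≠ 0)
      (by rw [show ((3:ℚ)) = (((3:ℕ):ℚ)) by norm_num, Rat.num_natCast]
          exact_mod_cast castne (p := p) (j := 3) (by norm_num) (by omega))]
    rw [Rat.cast_intCast, Rat.cast_ofNat, div_eq_mul_inv]
  -- the difference
  have hqden : (((x - y).den : ℕ) : ZMod p) ≠ 0 := by
    have hdvd := Rat.add_den_dvd x (-y)
    rw [← sub_eq_add_neg] at hdvd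
    have hnden : (-y).den = y.den := Rat.neg_den y
    rw [hnden] at hdvd
    refine den_ne_of_dvd hdvd ?_
    rw [Nat.cast_mul]
    exact mul_ne_zero hxden hyden
  have hqcast : (((x - y : ℚ)) : ZMod p) = 0 := by
    have hnegden : (((-y).den : ℕ) : ZMod p) ≠ 0 := by rw [Rat.neg_den]; exact hyden
    rw [sub_eq_add_neg, Rat.cast_add_of_ne_zero hxden hnegden, Rat.cast_neg, hxcast]
    rw [Finset.sum_congr rfl htermcast, core_id hh hp6, hycast]
    have hc3 : (3 : ZMod p) * (3 : ZMod p)⁻¹ = 1 := mul_inv_cancel₀ (three_ne hh hp6)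
    push_cast
    linear_combination (-2 : ZMod p) * hc3
  obtain ⟨r, hr1, hr2⟩ := ratCongr_of_cast_zero hqden hqcast
  exact ⟨r, hr1, hr2⟩
end

section
/- For any nonnegative integers n and k, the trinomial coefficient satisfies T(n,k) = ∑_{j=0}^{k} C(n,j) C(n,k-j) cos((k-2j)π/3), where T(n,k) is defined by (1+x+x²)^n = ∑_{k=0}^{2n} T(n,k) x^k. -/
open Polynomial Complex Finset

/-- The trinomial coefficient: coefficient of x^k in (1+x+x^2)^n. -/
noncomputable def trinom (n k : ℕ) : ℤ :=
  ((1 + Polynomial.X + Polynomial.X ^ 2 : Polynomial ℤ) ^ n).coeff k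

lemma coeff_one_add_C_mul_X_pow (a : ℂ) (n j : ℕ) :
    ((1 + Polynomial.C a * Polynomial.X) ^ n).coeff j = n.choose j * a ^ j := by
  rw [add_comm, add_pow, Polynomial.finset_sum_coeff]
  simp only [one_pow, mul_one, mul_pow, ← Polynomial.C_pow,
    Polynomial.coeff_mul_natCast, Polynomial.coeff_C_mul,
    Polynomial.coeff_X_pow, mul_ite, mul_zero, mul_one, ite_mul, zero_mul]
  rw [Finset.sum_ite_eq (Finset.range (n+1)) j (fun m => a ^ m * (n.choose m : ℂ))]
  rcases le_or_gt j n with h | h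
  · simp [Nat.lt_succ_of_le h, mul_comm]
  · simp [Nat.choose_eq_zero_of_lt h]

noncomputable def w : ℂ := Complex.exp ((Real.pi / 3 : ℝ) * Complex.I)
noncomputable def w' : ℂ := Complex.exp ((-(Real.pi / 3) : ℝ) * Complex.I)

lemma w_mul_w' : w * w' = 1 := by
  rw [w, w', ← Complex.exp_add, ← Complex.exp_zero]
  congr 1
  push_cast
  ring

lemma w_add_w' : w + w' = 1 := by
  rw [w, w', Complex.exp_mul_I, Complex.exp_mul_I,
    ← Complex.ofReal_cos, ← Complex.ofReal_sin, ← Complex.ofReal_cos, ← Complex.ofReal_sin,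
    Real.cos_neg, Real.sin_neg, Real.cos_pi_div_three]
  push_cast
  ring

lemma factor : (1 + Polynomial.X + Polynomial.X ^ 2 : Polynomial ℂ) =
    (1 + Polynomial.C w * Polynomial.X) * (1 + Polynomial.C w' * Polynomial.X) := by
  have h1 := w_mul_w'
  have h2 := w_add_w'
  have : (Polynomial.C w * Polynomial.X) * (Polynomial.C w' * Polynomial.X)
      = Polynomial.X ^ 2 := by
    rw [mul_mul_mul_comm, ← Polynomial.C_mul, h1]
    simp [sq]
  have h3 : Polynomial.C w * Polynomial.X + Polynomial.C w' * Polynomial.X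
      = Polynomial.X := by
    rw [← add_mul, ← Polynomial.C_add, h2]
    simp
  calc (1 + Polynomial.X + Polynomial.X ^ 2 : Polynomial ℂ)
      = 1 + (Polynomial.C w * Polynomial.X + Polynomial.C w' * Polynomial.X)
        + (Polynomial.C w * Polynomial.X) * (Polynomial.C w' * Polynomial.X) := by
        rw [h3, this]
    _ = _ := by ring

lemma trinom_complex (n k : ℕ) :
    (trinom n k : ℂ) = ∑ j ∈ Finset.range (k + 1),
      (n.choose j : ℂ) * (n.choose (k - j) : ℂ) * (w ^ j * w' ^ (k - j)) := by
  have hmap : ((1 + Polynomial.X + Polynomial.X ^ 2 : Polynomial ℂ) ^ n).coeff k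
      = (trinom n k : ℂ) := by
    rw [trinom]
    rw [show (1 + Polynomial.X + Polynomial.X ^ 2 : Polynomial ℂ)
        = (Polynomial.map (Int.castRingHom ℂ) (1 + Polynomial.X + Polynomial.X ^ 2)) by
      simp [Polynomial.map_add, Polynomial.map_pow]]
    rw [← Polynomial.map_pow, Polynomial.coeff_map]
    simp
  rw [← hmap, factor, mul_pow, Polynomial.coeff_mul,
    Finset.Nat.sum_antidiagonal_eq_sum_range_succ_mk]
  refine Finset.sum_congr rfl fun j _ => ?_
  rw [coeff_one_add_C_mul_X_pow, coeff_one_add_C_mul_X_pow]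
  ring

theorem stmt12 (n k : ℕ) :
    (trinom n k : ℝ) =
      ∑ j ∈ Finset.range (k + 1),
        (n.choose j : ℝ) * (n.choose (k - j) : ℝ) *
          Real.cos (((k : ℤ) - 2 * (j : ℤ)) * Real.pi / 3) := by
  have h := trinom_complex n k
  have hre := congrArg Complex.re h
  rw [Complex.re_sum] at hre
  rw [show ((trinom n k : ℤ) : ℂ).re = ((trinom n k : ℤ) : ℝ) by simp] at hre
  rw [hre]
  refine Finset.sum_congr rfl fun j hj => ?_
  have hjk : j ≤ k := Nat.lt_succ_iff.mp (Finset.mem_range.mp hj)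
  have hw : w ^ j * w' ^ (k - j)
      = Complex.exp ((((2 * (j:ℝ) - k) * (Real.pi / 3) : ℝ) : ℂ) * Complex.I) := by
    rw [w, w', ← Complex.exp_nat_mul, ← Complex.exp_nat_mul, ← Complex.exp_add]
    congr 1
    have : ((k - j : ℕ) : ℂ) = (k : ℂ) - j := by
      push_cast [hjk]; ring
    rw [this]
    push_cast
    ring
  rw [hw]
  have h2 : ((n.choose j : ℂ) * (n.choose (k - j) : ℂ) *
      Complex.exp ((((2 * (j:ℝ) - k) * (Real.pi / 3) : ℝ) : ℂ) * Complex.I))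
      = (((n.choose j * n.choose (k - j) : ℝ) : ℂ)) *
        Complex.exp ((((2 * (j:ℝ) - k) * (Real.pi / 3) : ℝ) : ℂ) * Complex.I) := by
    push_cast; ring
  rw [h2, Complex.re_ofReal_mul, Complex.exp_ofReal_mul_I_re]
  have : (((k : ℤ) : ℝ) - 2 * ((j : ℤ) : ℝ)) * Real.pi / 3
      = -((2 * (j:ℝ) - k) * (Real.pi / 3)) := by push_cast; ring
  push_cast
  rw [show ((k:ℝ) - 2 * j) * Real.pi / 3 = -((2 * (j:ℝ) - k) * (Real.pi / 3)) by ring,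
    Real.cos_neg]
end
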